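/- arXiv:2104.12153 — 9 statements merged into one kernel-verified Lean document; each statement's English description precedes it below -/
import Mathlib

section
/- Let E be a normal partially ordered vector space, let (x_λ) be a decreasing net in E, and let x ∈ E. Then x_λ ↓ x (i.e., x is the infimum of the net) if and only if ⟨x, x′⟩ = inf_λ ⟨x_λ, x′⟩ for every positive order continuous functional x′ on E. -/
/-- A positive, order continuous linear functional: it maps decreasing nets
(equivalently, nonempty downward directed sets) with infimum `0` to nets with
infimum `0`. -/
def IsPosOrderContFunctional {E : Type*} [AddCommGroup E] [PartialOrder E] [IsOrderedAddMonoid E] [Module ℝ E]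
    (φ : E →ₗ[ℝ] ℝ) : Prop :=
  (∀ x : E, 0 ≤ x → 0 ≤ φ x) ∧
  ∀ S : Set E, S.Nonempty → DirectedOn (· ≥ ·) S → IsGLB S 0 → IsGLB (φ '' S) 0

/-- `E` is normal: positivity is detected by the positive order continuous functionals. -/
def IsNormalPOVS (E : Type*) [AddCommGroup E] [PartialOrder E] [IsOrderedAddMonoid E] [Module ℝ E] : Prop :=
  ∀ x : E, (∀ φ : E →ₗ[ℝ] ℝ, IsPosOrderContFunctional φ → 0 ≤ φ x) ↔ 0 ≤ x

/-- Let `E` be a normal partially ordered vector space, `(x_λ)` a decreasing net in `E`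
and `x ∈ E`. Then `x_λ ↓ x` if and only if `⟨x, x′⟩ = inf_λ ⟨x_λ, x′⟩` for every
positive order continuous functional `x′` on `E`. -/
theorem decreasing_net_inf_iff_inf_via_functionals {E : Type*} [AddCommGroup E] [PartialOrder E] [IsOrderedAddMonoid E]
    [Module ℝ E] (hnormal : IsNormalPOVS E)
    {ι : Type*} [Preorder ι] [Nonempty ι] (hι : ∀ a b : ι, ∃ c, a ≤ c ∧ b ≤ c)
    (xl : ι → E) (hdec : Antitone xl) (x : E) :
    IsGLB (Set.range xl) x ↔
      ∀ φ : E →ₗ[ℝ] ℝ, IsPosOrderContFunctional φ →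
        IsGLB (φ '' Set.range xl) (φ x) := by
  constructor
  · intro hglb φ hφ
    obtain ⟨hpos, hcont⟩ := hφ
    set S : Set E := Set.range (fun i => xl i - x) with hSdef
    have hne : S.Nonempty := ⟨_, ⟨Classical.arbitrary ι, rfl⟩⟩
    have hdir : DirectedOn (· ≥ ·) S := by
      rintro _ ⟨a, rfl⟩ _ ⟨b, rfl⟩
      obtain ⟨c, hac, hbc⟩ := hι a b
      exact ⟨xl c - x, ⟨c, rfl⟩, sub_le_sub_right (hdec hac) x,
        sub_le_sub_right (hdec hbc) x⟩
    have hSglb : IsGLB S 0 := by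
      constructor
      · rintro _ ⟨i, rfl⟩
        exact sub_nonneg.mpr (hglb.1 ⟨i, rfl⟩)
      · intro z hz
        have : ∀ i, z + x ≤ xl i := fun i => by
          have := hz ⟨i, rfl⟩
          simpa [le_sub_iff_add_le] using this
        have : z + x ≤ x := hglb.2 (by rintro _ ⟨i, rfl⟩; exact this i)
        exact add_le_iff_nonpos_left.mp this
    have hφS : IsGLB (φ '' S) 0 := hcont S hne hdir hSglb
    constructor
    · rintro _ ⟨_, ⟨i, rfl⟩, rfl⟩
      have h0 : (0:ℝ) ≤ φ (xl i - x) := hφS.1 ⟨xl i - x, ⟨i, rfl⟩, rfl⟩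
      have : φ (xl i - x) = φ (xl i) - φ x := map_sub φ _ _
      linarith
    · intro b hb
      have : b - φ x ≤ 0 := hφS.2 (by
        rintro _ ⟨_, ⟨i, rfl⟩, rfl⟩
        have hb' : b ≤ φ (xl i) := hb ⟨xl i, ⟨i, rfl⟩, rfl⟩
        have : φ (xl i - x) = φ (xl i) - φ x := map_sub φ _ _
        linarith)
      linarith
  · intro h
    constructor
    · rintro _ ⟨i, rfl⟩
      rw [← sub_nonneg, ← hnormal (xl i - x)]
      intro φ hφ
      have hglb := h φ hφ
      have : φ x ≤ φ (xl i) := hglb.1 ⟨xl i, ⟨i, rfl⟩, rfl⟩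
      have heq : φ (xl i - x) = φ (xl i) - φ x := map_sub φ _ _
      linarith
    · intro y hy
      rw [← sub_nonneg, ← hnormal (x - y)]
      intro φ hφ
      have hglb := h φ hφ
      have hyb : φ y ≤ φ x := hglb.2 (by
        rintro _ ⟨_, ⟨i, rfl⟩, rfl⟩
        have : y ≤ xl i := hy ⟨i, rfl⟩
        have h0 : (0:ℝ) ≤ φ (xl i - y) := hφ.1 _ (sub_nonneg.mpr this)
        have heq : φ (xl i - y) = φ (xl i) - φ y := map_sub φ _ _
        linarith)
      have heq : φ (x - y) = φ x - φ y := map_sub φ _ _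
      linarith
end

section
/- Let X be a locally compact Hausdorff space, E a monotone complete and normal partially ordered vector space, and μ a regular Borel measure on X with values in the extended positive cone of E. Then μ is inner regular at every Borel set Δ with μ(Δ) ∈ E: μ(Δ) = sup{μ(K) : K compact, K ⊆ Δ}. -/
/-- `E` is monotone complete. -/
def MonotoneComplete (E : Type*) [Preorder E] : Prop :=
  ∀ S : Set E, S.Nonempty → DirectedOn (· ≤ ·) S → BddAbove S → ∃ y, IsLUB S y

section Measures

variable {X : Type*} [TopologicalSpace X] [MeasurableSpace X] [BorelSpace X]
variable {E : Type*} [AddCommGroup E] [PartialOrder E] [IsOrderedAddMonoid E]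

/-- A positive `WithTop E`-valued measure on the Borel σ-algebra of `X`. -/
def IsPosMeasure (μ : Set X → WithTop E) : Prop :=
  μ ∅ = 0 ∧ (∀ Δ : Set X, MeasurableSet Δ → 0 ≤ μ Δ) ∧
  ∀ Δ : ℕ → Set X, (∀ n, MeasurableSet (Δ n)) → Pairwise (Function.onFun Disjoint Δ) →
    IsLUB {y : WithTop E | ∃ N : ℕ, y = ∑ n ∈ Finset.range N, μ (Δ n)} (μ (⋃ n, Δ n))

def InnerRegularAt (μ : Set X → WithTop E) (Δ : Set X) : Prop :=
  IsLUB {y : WithTop E | ∃ K : Set X, IsCompact K ∧ K ⊆ Δ ∧ y = μ K} (μ Δ)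

def OuterRegularAt (μ : Set X → WithTop E) (Δ : Set X) : Prop :=
  IsGLB {y : WithTop E | ∃ V : Set X, IsOpen V ∧ Δ ⊆ V ∧ y = μ V} (μ Δ)

/-- A regular Borel measure: finite on compact sets, inner regular at open sets and
outer regular at all Borel sets. -/
def IsRegularBorel (μ : Set X → WithTop E) : Prop :=
  (∀ K : Set X, IsCompact K → μ K ≠ ⊤) ∧
  (∀ V : Set X, IsOpen V → InnerRegularAt μ V) ∧
  (∀ Δ : Set X, MeasurableSet Δ → OuterRegularAt μ Δ)

end Measures

section MuHelpers
variable {X : Type*} [TopologicalSpace X] [MeasurableSpace X] [BorelSpace X]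
variable {E : Type*} [AddCommGroup E] [PartialOrder E] [IsOrderedAddMonoid E]
variable {μ : Set X → WithTop E} (hμ : IsPosMeasure μ)
include hμ

omit [TopologicalSpace X] [BorelSpace X] in
lemma aux_meas_union {A B : Set X} (hA : MeasurableSet A) (hB : MeasurableSet B)
    (hAB : Disjoint A B) : μ (A ∪ B) = μ A + μ B := by
  classical
  set Δ : ℕ → Set X := fun n => if n = 0 then A else if n = 1 then B else ∅ with hΔdef
  have hmeas : ∀ n, MeasurableSet (Δ n) := by
    intro n
    simp only [hΔdef]
    split <;> [exact hA; skip]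
    split <;> [exact hB; exact MeasurableSet.empty]
  have hdisj : Pairwise (Function.onFun Disjoint Δ) := by
    intro i j hij
    simp only [Function.onFun, hΔdef]
    split_ifs <;> simp_all [hAB, hAB.symm]
  have hunion : (⋃ n, Δ n) = A ∪ B := by
    apply subset_antisymm
    · apply Set.iUnion_subset
      intro n
      simp only [hΔdef]
      split
      · exact Set.subset_union_left
      split
      · exact Set.subset_union_right
      · exact Set.empty_subset _
    · apply Set.union_subset
      · exact le_trans (le_of_eq rfl) (Set.subset_iUnion Δ 0)
      · exact le_trans (le_of_eq rfl) (Set.subset_iUnion Δ 1)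
  have hlub := hμ.2.2 Δ hmeas hdisj
  rw [hunion] at hlub
  have hsum2 : ∑ n ∈ Finset.range 2, μ (Δ n) = μ A + μ B := by
    simp [hΔdef, Finset.sum_range_succ]
  have hgreat : IsGreatest {y : WithTop E | ∃ N : ℕ, y = ∑ n ∈ Finset.range N, μ (Δ n)}
      (μ A + μ B) := by
    constructor
    · exact ⟨2, hsum2.symm⟩
    · rintro y ⟨N, rfl⟩
      rcases le_or_gt N 2 with hN | hN
      · interval_cases N
        · simpa using add_nonneg (hμ.2.1 A hA) (hμ.2.1 B hB)
        · simp only [Finset.sum_range_one, hΔdef, if_pos rfl]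
          exact le_add_of_nonneg_right (hμ.2.1 B hB)
        · exact le_of_eq hsum2
      · have : ∑ n ∈ Finset.range N, μ (Δ n) = ∑ n ∈ Finset.range 2, μ (Δ n) := by
          apply (Finset.sum_subset (Finset.range_subset_range.2 (le_of_lt hN)) _).symm
          intro x _ hx
          simp only [Finset.mem_range, not_lt] at hx
          have h1 : x ≠ 0 := by omega
          have h2 : x ≠ 1 := by omega
          simp [hΔdef, h1, h2, hμ.1]
        rw [this, hsum2]
  exact hlub.unique hgreat.isLUB

omit [TopologicalSpace X] [BorelSpace X] in
lemma aux_meas_mono {A B : Set X} (hA : MeasurableSet A) (hB : MeasurableSet B)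
    (hAB : A ⊆ B) : μ A ≤ μ B := by
  have : μ B = μ A + μ (B \ A) := by
    rw [← aux_meas_union hμ hA (hB.diff hA) disjoint_sdiff_self_right,
      Set.union_diff_cancel hAB]
  rw [this]
  exact le_add_of_nonneg_right (hμ.2.1 _ (hB.diff hA))

omit [TopologicalSpace X] [BorelSpace X] in
lemma aux_meas_subadd {A B : Set X} (hA : MeasurableSet A) (hB : MeasurableSet B) :
    μ (A ∪ B) ≤ μ A + μ B := by
  rw [show A ∪ B = A ∪ (B \ A) by simp,
    aux_meas_union hμ hA (hB.diff hA) disjoint_sdiff_self_right]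
  exact add_le_add_right (aux_meas_mono hμ (hB.diff hA) hB Set.diff_subset) _

end MuHelpers

section OrderHelpers
variable {E : Type*} [AddCommGroup E] [PartialOrder E] [IsOrderedAddMonoid E] [Module ℝ E]

lemma aux_phi_mono {φ : E →ₗ[ℝ] ℝ} (hφ : IsPosOrderContFunctional φ) {x y : E} (h : x ≤ y) :
    φ x ≤ φ y := by
  have := hφ.1 (y - x) (sub_nonneg.2 h)
  rw [map_sub] at this; linarith

lemma aux_glb_zero_exists {φ : E →ₗ[ℝ] ℝ} (hφ : IsPosOrderContFunctional φ) {T : Set E}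
    (hne : T.Nonempty) (hdir : DirectedOn (· ≥ ·) T) (h : IsGLB T 0) {ε : ℝ} (hε : 0 < ε) :
    ∃ t ∈ T, φ t < ε := by
  have h2 := hφ.2 T hne hdir h
  by_contra hc
  push_neg at hc
  have : ε ∈ lowerBounds (φ '' T) := by rintro _ ⟨t, ht, rfl⟩; exact hc t ht
  linarith [h2.2 this]

omit [Module ℝ E] in
lemma aux_glb_sub {S : Set E} {a : E} (h : IsGLB S a) : IsGLB ((fun x => x - a) '' S) 0 := by
  constructor
  · rintro _ ⟨x, hx, rfl⟩
    exact sub_nonneg.2 (h.1 hx)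
  · intro b hb
    have : b + a ∈ lowerBounds S := fun x hx => le_sub_iff_add_le.mp (hb ⟨x, hx, rfl⟩)
    exact add_le_iff_nonpos_left.mp (h.2 this)

omit [Module ℝ E] in
lemma aux_lub_sub {S : Set E} {v : E} (h : IsLUB S v) : IsGLB ((fun x => v - x) '' S) 0 := by
  constructor
  · rintro _ ⟨x, hx, rfl⟩
    exact sub_nonneg.2 (h.1 hx)
  · intro b hb
    have : v - b ∈ upperBounds S := fun x hx => le_sub_comm.mp (hb ⟨x, hx, rfl⟩)
    have h2 := le_sub_iff_add_le.mp (h.2 this)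
    exact (add_le_iff_nonpos_right v).mp h2

lemma aux_exists_glb_lt {φ : E →ₗ[ℝ] ℝ} (hφ : IsPosOrderContFunctional φ) {S : Set E}
    (hne : S.Nonempty) (hdir : DirectedOn (· ≥ ·) S) {a : E} (h : IsGLB S a) {ε : ℝ}
    (hε : 0 < ε) : ∃ s ∈ S, φ s < φ a + ε := by
  have hdir' : DirectedOn (· ≥ ·) ((fun x => x - a) '' S) := by
    rintro _ ⟨x, hx, rfl⟩ _ ⟨y, hy, rfl⟩
    obtain ⟨z, hz, hzx, hzy⟩ := hdir x hx y hy
    exact ⟨z - a, ⟨z, hz, rfl⟩, sub_le_sub_right hzx a, sub_le_sub_right hzy a⟩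
  obtain ⟨_, ⟨s, hs, rfl⟩, hlt⟩ := aux_glb_zero_exists hφ (hne.image _) hdir' (aux_glb_sub h) hε
  rw [map_sub] at hlt
  exact ⟨s, hs, by linarith⟩

lemma aux_exists_lub_gt {φ : E →ₗ[ℝ] ℝ} (hφ : IsPosOrderContFunctional φ) {S : Set E}
    (hne : S.Nonempty) (hdir : DirectedOn (· ≤ ·) S) {v : E} (h : IsLUB S v) {ε : ℝ}
    (hε : 0 < ε) : ∃ s ∈ S, φ v - ε < φ s := by
  have hdir' : DirectedOn (· ≥ ·) ((fun x => v - x) '' S) := by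
    rintro _ ⟨x, hx, rfl⟩ _ ⟨y, hy, rfl⟩
    obtain ⟨z, hz, hzx, hzy⟩ := hdir x hx y hy
    exact ⟨v - z, ⟨z, hz, rfl⟩, sub_le_sub_left hzx v, sub_le_sub_left hzy v⟩
  obtain ⟨_, ⟨s, hs, rfl⟩, hlt⟩ := aux_glb_zero_exists hφ (hne.image _) hdir' (aux_lub_sub h) hε
  rw [map_sub] at hlt
  exact ⟨s, hs, by linarith⟩

end OrderHelpers

section WithTopHelpers
variable {E : Type*} [AddCommGroup E] [PartialOrder E] [IsOrderedAddMonoid E]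

lemma aux_isGLB_untop {S : Set (WithTop E)} (hS : ∀ x ∈ S, x ≠ ⊤) {a : E}
    (h : IsGLB S ↑a) : IsGLB {x : E | (↑x : WithTop E) ∈ S} a := by
  constructor
  · intro x hx
    exact_mod_cast h.1 hx
  · intro b hb
    have : (↑b : WithTop E) ∈ lowerBounds S := by
      intro s hs
      obtain ⟨x, rfl⟩ := WithTop.ne_top_iff_exists.mp (hS s hs)
      exact_mod_cast hb hs
    exact_mod_cast h.2 this

lemma aux_isLUB_untop {S : Set (WithTop E)} (hS : ∀ x ∈ S, x ≠ ⊤) {v : E}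
    (h : IsLUB S ↑v) : IsLUB {x : E | (↑x : WithTop E) ∈ S} v := by
  constructor
  · intro x hx
    exact_mod_cast h.1 hx
  · intro b hb
    have : (↑b : WithTop E) ∈ upperBounds S := by
      intro s hs
      obtain ⟨x, rfl⟩ := WithTop.ne_top_iff_exists.mp (hS s hs)
      exact_mod_cast hb hs
    exact_mod_cast h.2 this

lemma aux_IsGLB_of_subset {α : Type*} [Preorder α] {S T : Set α} {a : α} (h : IsGLB S a)
    (hTS : T ⊆ S) (hST : ∀ s ∈ S, ∃ t ∈ T, t ≤ s) : IsGLB T a := by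
  constructor
  · exact fun t ht => h.1 (hTS ht)
  · intro b hb
    refine h.2 fun s hs => ?_
    obtain ⟨t, ht, hts⟩ := hST s hs
    exact le_trans (hb ht) hts

end WithTopHelpers

section ApproxLemmas
variable {X : Type*} [TopologicalSpace X] [MeasurableSpace X] [BorelSpace X] [T2Space X]
variable {E : Type*} [AddCommGroup E] [PartialOrder E] [IsOrderedAddMonoid E] [Module ℝ E]
variable {μ : Set X → WithTop E} (hμ : IsPosMeasure μ) (hreg : IsRegularBorel μ)
include hμ hreg

omit [T2Space X] in
lemma aux_outer_approx {φ : E →ₗ[ℝ] ℝ} (hφ : IsPosOrderContFunctional φ)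
    {A U : Set X} (hA : MeasurableSet A) (hU : IsOpen U) (hAU : A ⊆ U) (hUfin : μ U ≠ ⊤)
    {a : E} (ha : (↑a : WithTop E) = μ A) {ε : ℝ} (hε : 0 < ε) :
    ∃ W, IsOpen W ∧ A ⊆ W ∧ W ⊆ U ∧ ∃ w : E, (↑w : WithTop E) = μ W ∧ φ w < φ a + ε := by
  have hGLB := hreg.2.2 A hA
  set T : Set (WithTop E) := {y | ∃ W, IsOpen W ∧ A ⊆ W ∧ W ⊆ U ∧ y = μ W} with hTdef
  have hTS : T ⊆ {y | ∃ V, IsOpen V ∧ A ⊆ V ∧ y = μ V} := by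
    rintro y ⟨W, h1, h2, h3, rfl⟩; exact ⟨W, h1, h2, rfl⟩
  have hST : ∀ s ∈ {y : WithTop E | ∃ V, IsOpen V ∧ A ⊆ V ∧ y = μ V}, ∃ t ∈ T, t ≤ s := by
    rintro _ ⟨V, hV, hAV, rfl⟩
    exact ⟨μ (V ∩ U), ⟨V ∩ U, hV.inter hU, Set.subset_inter hAV hAU,
      Set.inter_subset_right, rfl⟩,
      aux_meas_mono hμ ((hV.inter hU).measurableSet) hV.measurableSet Set.inter_subset_left⟩
  have hT : IsGLB T (μ A) := aux_IsGLB_of_subset hGLB hTS hST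
  have hTfin : ∀ x ∈ T, x ≠ ⊤ := by
    rintro _ ⟨W, h1, h2, h3, rfl⟩
    exact ne_top_of_le_ne_top hUfin
      (aux_meas_mono hμ h1.measurableSet hU.measurableSet h3)
  rw [← ha] at hT
  have hT_E := aux_isGLB_untop hTfin hT
  have hne : {x : E | (↑x : WithTop E) ∈ T}.Nonempty := by
    obtain ⟨u, hu⟩ := WithTop.ne_top_iff_exists.mp hUfin
    exact ⟨u, ⟨U, hU, hAU, subset_rfl, hu⟩⟩
  have hdir : DirectedOn (· ≥ ·) {x : E | (↑x : WithTop E) ∈ T} := by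
    rintro x ⟨W₁, hW₁o, hAW₁, hW₁U, hx⟩ y ⟨W₂, hW₂o, hAW₂, hW₂U, hy⟩
    have hfin : μ (W₁ ∩ W₂) ≠ ⊤ := ne_top_of_le_ne_top hUfin
      (aux_meas_mono hμ ((hW₁o.inter hW₂o).measurableSet) hU.measurableSet
        (le_trans Set.inter_subset_left hW₁U))
    obtain ⟨z, hz⟩ := WithTop.ne_top_iff_exists.mp hfin
    refine ⟨z, ⟨W₁ ∩ W₂, hW₁o.inter hW₂o, Set.subset_inter hAW₁ hAW₂,
      le_trans Set.inter_subset_left hW₁U, hz⟩, ?_, ?_⟩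
    · show z ≤ x
      rw [← WithTop.coe_le_coe, hz, hx]
      exact aux_meas_mono hμ ((hW₁o.inter hW₂o).measurableSet) hW₁o.measurableSet
        Set.inter_subset_left
    · show z ≤ y
      rw [← WithTop.coe_le_coe, hz, hy]
      exact aux_meas_mono hμ ((hW₁o.inter hW₂o).measurableSet) hW₂o.measurableSet
        Set.inter_subset_right
  obtain ⟨s, hs, hlt⟩ := aux_exists_glb_lt hφ hne hdir hT_E hε
  obtain ⟨W, h1, h2, h3, h4⟩ := hs
  exact ⟨W, h1, h2, h3, s, h4, hlt⟩

lemma aux_inner_approx {φ : E →ₗ[ℝ] ℝ} (hφ : IsPosOrderContFunctional φ)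
    {V : Set X} (hV : IsOpen V) {v : E} (hv : (↑v : WithTop E) = μ V) {ε : ℝ} (hε : 0 < ε) :
    ∃ K, IsCompact K ∧ K ⊆ V ∧ ∃ k : E, (↑k : WithTop E) = μ K ∧ φ v - ε < φ k := by
  set S : Set (WithTop E) := {y | ∃ K, IsCompact K ∧ K ⊆ V ∧ y = μ K} with hSdef
  have hLUB : IsLUB S (μ V) := hreg.2.1 V hV
  have hSfin : ∀ x ∈ S, x ≠ ⊤ := by
    rintro _ ⟨K, h1, h2, rfl⟩
    exact hreg.1 K h1
  rw [← hv] at hLUB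
  have hS_E := aux_isLUB_untop hSfin hLUB
  have hne : {x : E | (↑x : WithTop E) ∈ S}.Nonempty := by
    refine ⟨0, ⟨∅, isCompact_empty, Set.empty_subset V, ?_⟩⟩
    rw [hμ.1, WithTop.coe_zero]
  have hdir : DirectedOn (· ≤ ·) {x : E | (↑x : WithTop E) ∈ S} := by
    rintro x ⟨K₁, hK₁c, hK₁V, hx⟩ y ⟨K₂, hK₂c, hK₂V, hy⟩
    have hKc : IsCompact (K₁ ∪ K₂) := hK₁c.union hK₂c
    obtain ⟨z, hz⟩ := WithTop.ne_top_iff_exists.mp (hreg.1 _ hKc)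
    refine ⟨z, ⟨K₁ ∪ K₂, hKc, Set.union_subset hK₁V hK₂V, hz⟩, ?_, ?_⟩
    · show x ≤ z
      rw [← WithTop.coe_le_coe, hz, hx]
      exact aux_meas_mono hμ hK₁c.isClosed.measurableSet hKc.isClosed.measurableSet
        Set.subset_union_left
    · show y ≤ z
      rw [← WithTop.coe_le_coe, hz, hy]
      exact aux_meas_mono hμ hK₂c.isClosed.measurableSet hKc.isClosed.measurableSet
        Set.subset_union_right
  obtain ⟨s, hs, hlt⟩ := aux_exists_lub_gt hφ hne hdir hS_E hε
  obtain ⟨K, h1, h2, h3⟩ := hs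
  exact ⟨K, h1, h2, s, h3, hlt⟩

end ApproxLemmas

/-- Let `X` be a locally compact Hausdorff space, `E` a monotone complete and normal
partially ordered vector space, and `μ` a regular Borel measure with values in the
extended positive cone of `E`. Then `μ` is inner regular at every Borel set of finite
measure. -/
theorem regularBorel_innerRegular_at_finite_borel_sets
    {X : Type*} [TopologicalSpace X] [MeasurableSpace X] [BorelSpace X]
    [LocallyCompactSpace X] [T2Space X]
    {E : Type*} [AddCommGroup E] [PartialOrder E] [IsOrderedAddMonoid E] [Module ℝ E]
    (hmc : MonotoneComplete E) (hnormal : IsNormalPOVS E)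
    (μ : Set X → WithTop E) (hμ : IsPosMeasure μ) (hreg : IsRegularBorel μ)
    (Δ : Set X) (hΔ : MeasurableSet Δ) (hfin : μ Δ ≠ ⊤) :
    InnerRegularAt μ Δ := by
  constructor
  · rintro y ⟨K, hK, hKΔ, rfl⟩
    exact aux_meas_mono hμ hK.isClosed.measurableSet hΔ hKΔ
  · intro b hb
    rcases eq_or_ne b ⊤ with rfl | hbT
    · exact le_top
    obtain ⟨b', rfl⟩ := WithTop.ne_top_iff_exists.mp hbT
    obtain ⟨d, hd⟩ := WithTop.ne_top_iff_exists.mp hfin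
    rw [← hd, WithTop.coe_le_coe, ← sub_nonneg, ← hnormal]
    intro φ hφ
    rw [map_sub, sub_nonneg]
    apply le_of_forall_pos_le_add
    intro ε hε
    have hε3 : 0 < ε / 3 := by linarith
    -- find an open set of finite measure containing Δ
    have hV₀ : ∃ V₀, IsOpen V₀ ∧ Δ ⊆ V₀ ∧ μ V₀ ≠ ⊤ := by
      by_contra hc
      push_neg at hc
      have htop : (⊤ : WithTop E) ∈
          lowerBounds {y : WithTop E | ∃ V, IsOpen V ∧ Δ ⊆ V ∧ y = μ V} := by
        rintro _ ⟨V, h1, h2, rfl⟩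
        exact (hc V h1 h2).ge
      exact hfin (top_le_iff.mp ((hreg.2.2 Δ hΔ).2 htop))
    obtain ⟨V₀, hV₀o, hΔV₀, hV₀fin⟩ := hV₀
    -- open V with Δ ⊆ V ⊆ V₀ of finite measure
    obtain ⟨V, hVo, hΔV, hVV₀, v, hv, hφv⟩ :=
      aux_outer_approx hμ hreg hφ hΔ hV₀o hΔV₀ hV₀fin hd hε3
    have hVfin : μ V ≠ ⊤ := hv ▸ WithTop.coe_ne_top
    -- compact K ⊆ V with φ (μ K) close to φ (μ V)
    obtain ⟨K, hKc, hKV, k, hk, hφk⟩ := aux_inner_approx hμ hreg hφ hVo hv hε3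
    -- outer-approximate V \ Δ by W ⊆ V
    have hAmeas : MeasurableSet (V \ Δ) := hVo.measurableSet.diff hΔ
    have hAfin : μ (V \ Δ) ≠ ⊤ := ne_top_of_le_ne_top hVfin
      (aux_meas_mono hμ hAmeas hVo.measurableSet Set.diff_subset)
    obtain ⟨a, ha⟩ := WithTop.ne_top_iff_exists.mp hAfin
    obtain ⟨W, hWo, hAW, hWV, w, hw, hφw⟩ :=
      aux_outer_approx hμ hreg hφ hAmeas hVo Set.diff_subset hVfin ha hε3
    -- additivity: v = d + a
    have hadd : μ V = μ Δ + μ (V \ Δ) := by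
      rw [← aux_meas_union hμ hΔ hAmeas disjoint_sdiff_self_right, Set.union_diff_cancel hΔV]
    have hva : v = d + a := by
      have : (↑v : WithTop E) = ↑(d + a) := by
        rw [hv, hadd, ← hd, ← ha, WithTop.coe_add]
      exact_mod_cast this
    -- K' := K \ W is a compact subset of Δ
    set K' := K \ W with hK'def
    have hK'c : IsCompact K' := hKc.diff hWo
    have hK'Δ : K' ⊆ Δ := by
      intro x hx
      by_contra hxΔ
      exact hx.2 (hAW ⟨hKV hx.1, hxΔ⟩)
    obtain ⟨k', hk'⟩ := WithTop.ne_top_iff_exists.mp (hreg.1 K' hK'c)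
    -- μ K ≤ μ K' + μ W
    have hsub : μ K ≤ μ K' + μ W := by
      calc μ K ≤ μ (K' ∪ W) := aux_meas_mono hμ hKc.isClosed.measurableSet
            (hK'c.isClosed.measurableSet.union hWo.measurableSet)
            (by
              intro x hx
              by_cases h : x ∈ W
              · exact Or.inr h
              · exact Or.inl ⟨hx, h⟩)
        _ ≤ μ K' + μ W := aux_meas_subadd hμ hK'c.isClosed.measurableSet hWo.measurableSet
    have hkk : k ≤ k' + w := by
      rw [← WithTop.coe_le_coe, WithTop.coe_add, hk, hk', hw]
      exact hsub
    have hk'b : k' ≤ b' := by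
      rw [← WithTop.coe_le_coe, hk']
      exact hb ⟨K', hK'c, hK'Δ, rfl⟩
    -- real arithmetic
    have h1 : φ w < φ v - φ d + ε / 3 := by
      have haφ : φ a = φ v - φ d := by
        rw [hva, map_add]; ring
      linarith
    have h2 := aux_phi_mono hφ hkk
    have h3 := aux_phi_mono hφ hk'b
    rw [map_add] at h2
    linarith
end

section
/- Let X be a locally compact Hausdorff space, E a monotone complete and normal partially ordered vector space, and μ a positive Ē-valued Borel measure on X such that for every relatively compact open subset U the restriction of μ to the Borel sets of U is a regular Borel measure on U. If μ is weakly inner regular at a Borel set Δ, then μ is inner regular at Δ. -/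
section Measures

variable {X : Type*} [TopologicalSpace X] [MeasurableSpace X] [BorelSpace X]
variable {E : Type*} [AddCommGroup E] [PartialOrder E] [IsOrderedAddMonoid E]

def WeaklyInnerRegularAt (μ : Set X → WithTop E) (Δ : Set X) : Prop :=
  IsLUB {y : WithTop E | ∃ K : Set X, IsCompact K ∧ y = μ (Δ ∩ K)} (μ Δ)

/-- Outer regularity at `Δ` relative to an open set `U` (identifying the Borel sets of
the subspace `U` with the Borel sets of `X` contained in `U`): `μ Δ` is the infimum of
`μ V` over sets `V ⊆ U` open (in `U`, equivalently in `X`) containing `Δ`. -/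
def RelOuterRegularAt (μ : Set X → WithTop E) (U Δ : Set X) : Prop :=
  IsGLB {y : WithTop E | ∃ V : Set X, IsOpen V ∧ V ⊆ U ∧ Δ ⊆ V ∧ y = μ V} (μ Δ)

/-- The restriction of `μ` to the Borel σ-algebra of the open subspace `U` is a regular
Borel measure on `U`: finite on compact subsets of `U`, inner regular at sets open in
`U`, and outer regular (relative to `U`) at all Borel subsets of `U`. -/
def RestrictionRegularBorel (μ : Set X → WithTop E) (U : Set X) : Prop :=
  (∀ K : Set X, IsCompact K → K ⊆ U → μ K ≠ ⊤) ∧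
  (∀ V : Set X, IsOpen V → V ⊆ U → InnerRegularAt μ V) ∧
  (∀ Δ : Set X, MeasurableSet Δ → Δ ⊆ U → RelOuterRegularAt μ U Δ)

end Measures

section AuxLemmas
variable {X : Type*} [TopologicalSpace X] [MeasurableSpace X] [BorelSpace X]
variable {E : Type*} [AddCommGroup E] [PartialOrder E] [IsOrderedAddMonoid E]

lemma posMeasure_add {μ : Set X → WithTop E} (hμ : IsPosMeasure μ)
    {A B : Set X} (hA : MeasurableSet A) (hB : MeasurableSet B) (hd : Disjoint A B) :
    μ (A ∪ B) = μ A + μ B := by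
  obtain ⟨h0, hpos, hadd⟩ := hμ
  set Δ : ℕ → Set X := fun n => if n = 0 then A else if n = 1 then B else ∅ with hΔdef
  have hmeas : ∀ n, MeasurableSet (Δ n) := by
    intro n; dsimp only [Δ]
    split
    · exact hA
    · split
      · exact hB
      · exact MeasurableSet.empty
  have hpw : Pairwise (Function.onFun Disjoint Δ) := by
    intro i j hij
    dsimp only [Function.onFun, Δ]
    rcases eq_or_ne i 0 with h0i | h0i <;> rcases eq_or_ne j 0 with h0j | h0j <;>
      rcases eq_or_ne i 1 with h1i | h1i <;> rcases eq_or_ne j 1 with h1j | h1j <;>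
      simp_all <;> first
        | exact hd
        | exact hd.symm
        | skip
  have hU : (⋃ n, Δ n) = A ∪ B := by
    ext x
    simp only [Set.mem_iUnion, Set.mem_union]
    constructor
    · rintro ⟨n, hn⟩
      dsimp only [Δ] at hn
      split at hn
      · exact Or.inl hn
      · split at hn
        · exact Or.inr hn
        · exact absurd hn (Set.notMem_empty x)
    · rintro (h | h)
      · exact ⟨0, by simpa [Δ] using h⟩
      · exact ⟨1, by simpa [Δ] using h⟩
  have h := hadd Δ hmeas hpw
  rw [hU] at h
  have hval : ∀ N, 2 ≤ N → ∑ n ∈ Finset.range N, μ (Δ n) = μ A + μ B := by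
    intro N hN
    induction N, hN using Nat.le_induction with
    | base => simp [Finset.sum_range_succ, Δ]
    | succ N hN ih =>
        rw [Finset.sum_range_succ, ih]
        have : Δ N = ∅ := by
          dsimp only [Δ]; rw [if_neg (by omega), if_neg (by omega)]
        rw [this, h0, add_zero]
  have hlub2 : IsLUB {y : WithTop E | ∃ N : ℕ, y = ∑ n ∈ Finset.range N, μ (Δ n)}
      (μ A + μ B) := by
    constructor
    · rintro y ⟨N, rfl⟩
      rcases le_or_gt 2 N with hN | hN
      · exact (hval N hN).le
      · interval_cases N
        · simpa using add_nonneg (hpos A hA) (hpos B hB)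
        · simp only [Finset.sum_range_one]
          have : Δ 0 = A := by simp [Δ]
          rw [this]
          exact le_add_of_nonneg_right (hpos B hB)
    · intro b hb
      have := hb ⟨2, rfl⟩
      rwa [hval 2 le_rfl] at this
  exact h.unique hlub2

lemma posMeasure_mono {μ : Set X → WithTop E} (hμ : IsPosMeasure μ)
    {A B : Set X} (hA : MeasurableSet A) (hB : MeasurableSet B) (hAB : A ⊆ B) :
    μ A ≤ μ B := by
  have h := posMeasure_add hμ hA (hB.diff hA) disjoint_sdiff_self_right
  rw [Set.union_diff_cancel hAB] at h
  rw [h]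
  exact le_add_of_nonneg_right (hμ.2.1 _ (hB.diff hA))

end AuxLemmas


/-- Let `X` be a locally compact Hausdorff space, `E` a monotone complete and normal
partially ordered vector space, and `μ` a positive `WithTop E`-valued Borel measure on
`X` whose restriction to every relatively compact open subset `U` is a regular Borel
measure on `U`. If `μ` is weakly inner regular at a Borel set `Δ`, then `μ` is inner
regular at `Δ`. -/
theorem weaklyInnerRegular_innerRegular
    {X : Type*} [TopologicalSpace X] [MeasurableSpace X] [BorelSpace X]
    [LocallyCompactSpace X] [T2Space X]
    {E : Type*} [AddCommGroup E] [PartialOrder E] [IsOrderedAddMonoid E] [Module ℝ E]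
    (hmc : MonotoneComplete E) (hnormal : IsNormalPOVS E)
    (μ : Set X → WithTop E) (hμ : IsPosMeasure μ)
    (hrestr : ∀ U : Set X, IsOpen U → IsCompact (closure U) → RestrictionRegularBorel μ U)
    (Δ : Set X) (hΔ : MeasurableSet Δ) (hw : WeaklyInnerRegularAt μ Δ) :
    InnerRegularAt μ Δ := by
  obtain ⟨hub, hlub⟩ := hw
  constructor
  · rintro y ⟨K, hKc, hKΔ, rfl⟩
    exact hub ⟨K, hKc, by rw [Set.inter_eq_self_of_subset_right hKΔ]⟩
  · intro b hb
    apply hlub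
    rintro y ⟨K, hKc, rfl⟩
    -- show μ (Δ ∩ K) ≤ b
    obtain ⟨U, hUopen, hKU, hUcl⟩ := exists_isOpen_superset_and_isCompact_closure hKc
    have hKmeas : MeasurableSet K := hKc.isClosed.measurableSet
    have hreg := hrestr U hUopen hUcl
    have hμKtop : μ K ≠ ⊤ := hreg.1 K hKc hKU
    have hKdiff : MeasurableSet (K \ Δ) := hKmeas.diff hΔ
    have houter := hreg.2.2 (K \ Δ) hKdiff ((Set.diff_subset).trans hKU)
    -- split μ K
    have hsplit : μ K = μ (K \ Δ) + μ (Δ ∩ K) := by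
      have hunion : (K \ Δ) ∪ (Δ ∩ K) = K := by
        ext x; constructor
        · rintro (⟨h1, _⟩ | ⟨_, h2⟩) <;> assumption
        · intro hx
          by_cases hxΔ : x ∈ Δ
          · exact Or.inr ⟨hxΔ, hx⟩
          · exact Or.inl ⟨hx, hxΔ⟩
      have hdisj : Disjoint (K \ Δ) (Δ ∩ K) := by
        rw [Set.disjoint_left]
        rintro x ⟨_, h2⟩ ⟨h3, _⟩
        exact h2 h3
      have h2 := posMeasure_add hμ hKdiff (hΔ.inter hKmeas) hdisj
      rwa [hunion] at h2
    rcases eq_or_ne b ⊤ with rfl | hbtop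
    · exact le_top
    obtain ⟨b', rfl⟩ := WithTop.ne_top_iff_exists.mp hbtop
    -- finiteness
    have hsum_ne : μ (K \ Δ) + μ (Δ ∩ K) ≠ ⊤ := by rw [← hsplit]; exact hμKtop
    have hatop : μ (K \ Δ) ≠ ⊤ := (WithTop.add_ne_top.mp hsum_ne).1
    have hmtop : μ (Δ ∩ K) ≠ ⊤ := (WithTop.add_ne_top.mp hsum_ne).2
    obtain ⟨a', ha'⟩ := WithTop.ne_top_iff_exists.mp hatop
    obtain ⟨m', hm'⟩ := WithTop.ne_top_iff_exists.mp hmtop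
    -- key inequality: for each admissible V, a' + m' - b' ≤ μ V
    have hlower : (↑(a' + m' - b') : WithTop E) ∈
        lowerBounds {y : WithTop E | ∃ V : Set X, IsOpen V ∧ V ⊆ U ∧ K \ Δ ⊆ V ∧ y = μ V} := by
      rintro z ⟨V, hVopen, hVU, hKΔV, rfl⟩
      have hKVsub : K \ V ⊆ Δ := by
        intro x hx
        by_contra hxΔ
        exact hx.2 (hKΔV ⟨hx.1, hxΔ⟩)
      have hKVcomp : IsCompact (K \ V) := hKc.diff hVopen
      have hKVb : μ (K \ V) ≤ (b' : WithTop E) :=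
        hb ⟨K \ V, hKVcomp, hKVsub, rfl⟩
      have hKsplit2 : μ K = μ (K ∩ V) + μ (K \ V) := by
        have hunion : (K ∩ V) ∪ (K \ V) = K := by
          ext x; constructor
          · rintro (⟨h1, _⟩ | ⟨h1, _⟩) <;> assumption
          · intro hx
            by_cases hxV : x ∈ V
            · exact Or.inl ⟨hx, hxV⟩
            · exact Or.inr ⟨hx, hxV⟩
        have hdisj : Disjoint (K ∩ V) (K \ V) := by
          rw [Set.disjoint_left]
          rintro x ⟨_, h2⟩ ⟨_, h3⟩
          exact h3 h2
        have h3 := posMeasure_add hμ (hKmeas.inter hVopen.measurableSet)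
          (hKmeas.diff hVopen.measurableSet) hdisj
        rwa [hunion] at h3
      have hKV : μ (K ∩ V) ≤ μ V :=
        posMeasure_mono hμ (hKmeas.inter hVopen.measurableSet) hVopen.measurableSet
          Set.inter_subset_right
      have hkey : μ (K \ Δ) + μ (Δ ∩ K) ≤ μ V + (b' : WithTop E) := by
        rw [← hsplit, hKsplit2]
        exact add_le_add hKV hKVb
      rcases eq_or_ne (μ V) ⊤ with hV | hV
      · rw [hV]; exact le_top
      obtain ⟨v', hv'⟩ := WithTop.ne_top_iff_exists.mp hV
      rw [← ha', ← hm', ← hv', ← WithTop.coe_add, ← WithTop.coe_add,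
        WithTop.coe_le_coe] at hkey
      rw [← hv', WithTop.coe_le_coe]
      exact sub_le_iff_le_add.mpr hkey
    have hle := houter.2 hlower
    rw [← ha', WithTop.coe_le_coe] at hle
    have : m' ≤ b' := by
      have h2 : a' + m' ≤ a' + b' := by
        calc a' + m' = (a' + m' - b') + b' := by abel
        _ ≤ a' + b' := add_le_add_left hle b'
      exact le_of_add_le_add_left h2
    rw [← hm', WithTop.coe_le_coe]
    exact this
end

section
/- Let X be a locally compact Hausdorff space, E a monotone complete and normal partially ordered vector space, and μ a finite E-valued Borel measure on X such that its restriction to each relatively compact open subset is a regular Borel measure, and which is weakly inner regular at all Borel sets. Then μ is both inner regular and outer regular at all Borel sets. -/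
set_option linter.unusedSectionVars false
set_option linter.unusedVariables false

section Aux

variable {X : Type*} [TopologicalSpace X] [MeasurableSpace X] [BorelSpace X]
variable {E : Type*} [AddCommGroup E] [PartialOrder E] [IsOrderedAddMonoid E]
variable {μ : Set X → WithTop E}

lemma aux_add (hμ : IsPosMeasure μ) {A B : Set X} (hA : MeasurableSet A)
    (hB : MeasurableSet B) (hAB : Disjoint A B) : μ (A ∪ B) = μ A + μ B := by
  classical
  set Δ : ℕ → Set X := fun n => if n = 0 then A else if n = 1 then B else ∅ with hΔ
  have h0 : Δ 0 = A := rfl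
  have h1 : Δ 1 = B := rfl
  have h2 : ∀ n, Δ (n + 2) = ∅ := fun n => rfl
  have hmeas : ∀ n, MeasurableSet (Δ n) := by
    intro n
    rcases n with _ | _ | n
    · exact h0 ▸ hA
    · exact h1 ▸ hB
    · exact (h2 n) ▸ MeasurableSet.empty
  have hdisj : Pairwise (Function.onFun Disjoint Δ) := by
    intro i j hij
    unfold Function.onFun
    rcases i with _ | _ | i <;> rcases j with _ | _ | j
    · exact absurd rfl hij
    · exact h0 ▸ h1 ▸ hAB
    · rw [h2]; exact Set.disjoint_empty _
    · exact h0 ▸ h1 ▸ hAB.symm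
    · exact absurd rfl hij
    · rw [h2]; exact Set.disjoint_empty _
    · rw [h2]; exact Set.empty_disjoint _
    · rw [h2]; exact Set.empty_disjoint _
    · rw [h2]; exact Set.empty_disjoint _
  have hUnion : (⋃ n, Δ n) = A ∪ B := by
    apply Set.Subset.antisymm
    · intro x hx
      obtain ⟨n, hn⟩ := Set.mem_iUnion.mp hx
      rcases n with _ | _ | n
      · exact Or.inl hn
      · exact Or.inr hn
      · rw [h2] at hn; exact absurd hn (Set.notMem_empty x)
    · rintro x (hx | hx)
      · exact Set.mem_iUnion.mpr ⟨0, hx⟩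
      · exact Set.mem_iUnion.mpr ⟨1, hx⟩
  have hlub := hμ.2.2 Δ hmeas hdisj
  rw [hUnion] at hlub
  have hsum2 : ∀ M : ℕ, ∑ n ∈ Finset.range (M + 2), μ (Δ n) = μ A + μ B := by
    intro M
    induction M with
    | zero =>
        show ∑ n ∈ Finset.range 2, μ (Δ n) = μ A + μ B
        rw [Finset.sum_range_succ, Finset.sum_range_one, h0, h1]
    | succ m ih =>
        rw [Finset.sum_range_succ, ih, h2, hμ.1, add_zero]
  apply le_antisymm
  · apply hlub.2
    rintro y ⟨N, rfl⟩
    rcases N with _ | _ | N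
    · simpa using add_nonneg (hμ.2.1 A hA) (hμ.2.1 B hB)
    · rw [Finset.sum_range_one, h0]
      exact le_add_of_nonneg_right (hμ.2.1 B hB)
    · rw [hsum2 N]
  · exact hlub.1 ⟨2, (hsum2 0).symm⟩

lemma aux_mono (hμ : IsPosMeasure μ) {A B : Set X} (hA : MeasurableSet A)
    (hB : MeasurableSet B) (hAB : A ⊆ B) : μ A ≤ μ B := by
  have key : μ (A ∪ (B \ A)) = μ A + μ (B \ A) :=
    aux_add hμ hA (hB.diff hA) Set.disjoint_sdiff_right
  rw [Set.union_diff_cancel hAB] at key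
  rw [key]
  exact le_add_of_nonneg_right (hμ.2.1 _ (hB.diff hA))

lemma aux_fin (hμ : IsPosMeasure μ) (hfin : μ Set.univ ≠ ⊤) {A : Set X}
    (hA : MeasurableSet A) : μ A ≠ ⊤ := by
  intro hT
  apply hfin
  have : μ Set.univ = μ A + μ Aᶜ := by
    rw [← Set.union_compl_self A]
    exact aux_add hμ hA hA.compl disjoint_compl_right
  rw [this, hT, WithTop.top_add]

end Aux

lemma glb_untop {E : Type*} [PartialOrder E] {S : Set (WithTop E)} {d : E}
    (hS : ∀ y ∈ S, y ≠ ⊤) (h : IsGLB S (d : WithTop E)) :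
    IsGLB {x : E | (x : WithTop E) ∈ S} d := by
  constructor
  · intro x hx
    exact_mod_cast h.1 hx
  · intro c hc
    have : (c : WithTop E) ∈ lowerBounds S := by
      intro y hy
      obtain ⟨x, rfl⟩ := WithTop.ne_top_iff_exists.mp (hS y hy)
      exact_mod_cast hc hy
    exact_mod_cast h.2 this

lemma lub_untop {E : Type*} [PartialOrder E] {S : Set (WithTop E)} {d : E}
    (hS : ∀ y ∈ S, y ≠ ⊤) (h : IsLUB S (d : WithTop E)) :
    IsLUB {x : E | (x : WithTop E) ∈ S} d := by
  constructor
  · intro x hx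
    exact_mod_cast h.1 hx
  · intro c hc
    have : (c : WithTop E) ∈ upperBounds S := by
      intro y hy
      obtain ⟨x, rfl⟩ := WithTop.ne_top_iff_exists.mp (hS y hy)
      exact_mod_cast hc hy
    exact_mod_cast h.2 this

/-- Let `X` be a locally compact Hausdorff space, `E` a monotone complete and normal
partially ordered vector space, and `μ` a finite (`E`-valued) positive Borel measure on
`X` whose restriction to each relatively compact open subset is a regular Borel measure
and which is weakly inner regular at all Borel sets. Then `μ` is both inner regular and
outer regular at all Borel sets. -/
theorem finite_weaklyInnerRegular_inner_and_outer_regular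
    {X : Type*} [TopologicalSpace X] [MeasurableSpace X] [BorelSpace X]
    [LocallyCompactSpace X] [T2Space X]
    {E : Type*} [AddCommGroup E] [PartialOrder E] [IsOrderedAddMonoid E] [Module ℝ E]
    (hmc : MonotoneComplete E) (hnormal : IsNormalPOVS E)
    (μ : Set X → WithTop E) (hμ : IsPosMeasure μ) (hfin : μ Set.univ ≠ ⊤)
    (hrestr : ∀ U : Set X, IsOpen U → IsCompact (closure U) → RestrictionRegularBorel μ U)
    (hw : ∀ Δ : Set X, MeasurableSet Δ → WeaklyInnerRegularAt μ Δ) :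
    ∀ Δ : Set X, MeasurableSet Δ → InnerRegularAt μ Δ ∧ OuterRegularAt μ Δ := by
  -- Step 1: inner regularity at Δ ∩ K for measurable Δ and compact K
  have key : ∀ Δ : Set X, MeasurableSet Δ → ∀ K : Set X, IsCompact K →
      InnerRegularAt μ (Δ ∩ K) := by
    intro Δ hΔ K hK
    set A := Δ ∩ K with hAdef
    have hA : MeasurableSet A := hΔ.inter hK.measurableSet
    have hAK : A ⊆ K := Set.inter_subset_right
    obtain ⟨L, hL, hKL⟩ := exists_compact_superset hK
    set U := interior L with hUdef
    have hU : IsOpen U := isOpen_interior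
    have hUc : IsCompact (closure U) :=
      hL.of_isClosed_subset isClosed_closure (closure_minimal interior_subset hL.isClosed)
    have hAU : A ⊆ U := hAK.trans hKL
    obtain ⟨-, -, houterU⟩ := hrestr U hU hUc
    have hUA : MeasurableSet (U \ A) := hU.measurableSet.diff hA
    have hglb : RelOuterRegularAt μ U (U \ A) := houterU (U \ A) hUA Set.diff_subset
    constructor
    · rintro y ⟨C, hC, hCA, rfl⟩
      exact aux_mono hμ hC.measurableSet hA hCA
    · intro b hb
      rcases eq_or_ne b ⊤ with rfl | hbT
      · exact le_top
      obtain ⟨b', rfl⟩ := WithTop.ne_top_iff_exists.mp hbT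
      obtain ⟨a, ha⟩ : ∃ a : E, (a : WithTop E) = μ A :=
        WithTop.ne_top_iff_exists.mp (aux_fin hμ hfin hA)
      obtain ⟨d, hd⟩ : ∃ d : E, (d : WithTop E) = μ (U \ A) :=
        WithTop.ne_top_iff_exists.mp (aux_fin hμ hfin hUA)
      have hglb' : IsGLB {y : WithTop E | ∃ V : Set X,
          IsOpen V ∧ V ⊆ U ∧ U \ A ⊆ V ∧ y = μ V} ((d : WithTop E)) := by
        rw [hd]; exact hglb
      have hSfin : ∀ y ∈ {y : WithTop E | ∃ V : Set X,
          IsOpen V ∧ V ⊆ U ∧ U \ A ⊆ V ∧ y = μ V}, y ≠ ⊤ := by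
        rintro y ⟨V, hV, -, -, rfl⟩
        exact aux_fin hμ hfin hV.measurableSet
      have hglbE := glb_untop hSfin hglb'
      have hlow : a + d - b' ∈ lowerBounds {x : E | (x : WithTop E) ∈
          {y : WithTop E | ∃ V : Set X, IsOpen V ∧ V ⊆ U ∧ U \ A ⊆ V ∧ y = μ V}} := by
        rintro x ⟨V, hV, hVU, hUAV, hxV⟩
        have hCcpt : IsCompact (K \ V) := hK.diff hV
        have hCA : K \ V ⊆ A := by
          intro z hz
          by_contra hzA
          exact hz.2 (hUAV ⟨hKL hz.1, hzA⟩)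
        have hbC : μ (K \ V) ≤ (b' : WithTop E) := hb ⟨K \ V, hCcpt, hCA, rfl⟩
        obtain ⟨c, hc⟩ : ∃ c : E, (c : WithTop E) = μ (K \ V) :=
          WithTop.ne_top_iff_exists.mp (aux_fin hμ hfin hCcpt.measurableSet)
        obtain ⟨m, hm⟩ : ∃ m : E, (m : WithTop E) = μ (A ∩ V) :=
          WithTop.ne_top_iff_exists.mp (aux_fin hμ hfin (hA.inter hV.measurableSet))
        -- identity 1 : A = (K \ V) ∪ (A ∩ V)
        have hAdecomp : A = (K \ V) ∪ (A ∩ V) := by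
          apply Set.Subset.antisymm
          · intro z hz
            by_cases hzV : z ∈ V
            · exact Or.inr ⟨hz, hzV⟩
            · exact Or.inl ⟨hz.2, hzV⟩
          · rintro z (hz | hz)
            · exact hCA hz
            · exact hz.1
        have e1 : μ A = μ (K \ V) + μ (A ∩ V) := by
          conv_lhs => rw [hAdecomp]
          exact aux_add hμ hCcpt.measurableSet (hA.inter hV.measurableSet)
            (Set.disjoint_left.mpr fun z hz hz' => hz.2 hz'.2)
        -- identity 2 : V = (U \ A) ∪ (A ∩ V)
        have hVdecomp : V = (U \ A) ∪ (A ∩ V) := by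
          apply Set.Subset.antisymm
          · intro z hz
            by_cases hzA : z ∈ A
            · exact Or.inr ⟨hzA, hz⟩
            · exact Or.inl ⟨hVU hz, hzA⟩
          · rintro z (hz | hz)
            · exact hUAV hz
            · exact hz.2
        have e2 : μ V = μ (U \ A) + μ (A ∩ V) := by
          conv_lhs => rw [hVdecomp]
          exact aux_add hμ hUA (hA.inter hV.measurableSet)
            (Set.disjoint_left.mpr fun z hz hz' => hz.2 hz'.1)
        have ea : a = c + m := by
          have : (a : WithTop E) = ((c + m : E) : WithTop E) := by
            rw [ha, e1, ← hc, ← hm, WithTop.coe_add]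
          exact_mod_cast this
        have ex : x = d + m := by
          have : (x : WithTop E) = ((d + m : E) : WithTop E) := by
            rw [hxV, e2, ← hd, ← hm, WithTop.coe_add]
          exact_mod_cast this
        have ecb : c ≤ b' := by
          rw [← hc] at hbC
          exact_mod_cast hbC
        rw [ea, ex]
        calc c + m + d - b' ≤ b' + m + d - b' := by
              exact sub_le_sub_right (add_le_add_left (add_le_add_left ecb m) d) b'
          _ = d + m := by abel
      have hfinal : a + d - b' ≤ d := hglbE.2 hlow
      have hab : a ≤ b' := by
        have h1 : a + d ≤ d + b' := sub_le_iff_le_add.mp hfinal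
        have h2 : a + d ≤ b' + d := by rwa [add_comm d b'] at h1
        exact le_of_add_le_add_right h2
      rw [← ha]
      exact_mod_cast hab
  -- Step 2: inner regularity at all measurable sets
  have inner : ∀ Δ : Set X, MeasurableSet Δ → InnerRegularAt μ Δ := by
    intro Δ hΔ
    constructor
    · rintro y ⟨C, hC, hCΔ, rfl⟩
      exact aux_mono hμ hC.measurableSet hΔ hCΔ
    · intro b hb
      apply (hw Δ hΔ).2
      rintro y ⟨K, hK, rfl⟩
      apply (key Δ hΔ K hK).2
      rintro y ⟨C, hC, hCA, rfl⟩
      exact hb ⟨C, hC, hCA.trans Set.inter_subset_left, rfl⟩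
  -- Step 3: outer regularity at all measurable sets
  have outer : ∀ Δ : Set X, MeasurableSet Δ → OuterRegularAt μ Δ := by
    intro Δ hΔ
    have hinn : InnerRegularAt μ Δᶜ := inner Δᶜ hΔ.compl
    constructor
    · rintro y ⟨V, hV, hΔV, rfl⟩
      exact aux_mono hμ hΔ hV.measurableSet hΔV
    · intro b hb
      have hbuniv : b ≤ μ Set.univ := hb ⟨Set.univ, isOpen_univ, Set.subset_univ _, rfl⟩
      obtain ⟨u, hu⟩ : ∃ u : E, (u : WithTop E) = μ Set.univ :=
        WithTop.ne_top_iff_exists.mp hfin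
      have hbT : b ≠ ⊤ := by
        intro hbtop
        rw [hbtop, ← hu] at hbuniv
        exact absurd hbuniv (by simp)
      obtain ⟨b', rfl⟩ := WithTop.ne_top_iff_exists.mp hbT
      obtain ⟨t, ht⟩ : ∃ t : E, (t : WithTop E) = μ Δᶜ :=
        WithTop.ne_top_iff_exists.mp (aux_fin hμ hfin hΔ.compl)
      obtain ⟨s, hs⟩ : ∃ s : E, (s : WithTop E) = μ Δ :=
        WithTop.ne_top_iff_exists.mp (aux_fin hμ hfin hΔ)
      have hsplit : u = s + t := by
        have h1 : μ Set.univ = μ Δ + μ Δᶜ := by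
          rw [← Set.union_compl_self Δ]
          exact aux_add hμ hΔ hΔ.compl disjoint_compl_right
        have : (u : WithTop E) = ((s + t : E) : WithTop E) := by
          rw [hu, h1, ← hs, ← ht, WithTop.coe_add]
        exact_mod_cast this
      -- transfer inner regularity at Δᶜ to E
      have hinn' : IsLUB {y : WithTop E | ∃ K : Set X,
          IsCompact K ∧ K ⊆ Δᶜ ∧ y = μ K} ((t : WithTop E)) := by
        rw [ht]; exact hinn
      have hTfin : ∀ y ∈ {y : WithTop E | ∃ K : Set X,
          IsCompact K ∧ K ⊆ Δᶜ ∧ y = μ K}, y ≠ ⊤ := by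
        rintro y ⟨C, hC, -, rfl⟩
        exact aux_fin hμ hfin hC.measurableSet
      have hinnE := lub_untop hTfin hinn'
      have hub : u - b' ∈ upperBounds {x : E | (x : WithTop E) ∈
          {y : WithTop E | ∃ K : Set X, IsCompact K ∧ K ⊆ Δᶜ ∧ y = μ K}} := by
        rintro x ⟨C, hC, hCc, hxC⟩
        have hVo : IsOpen Cᶜ := hC.isClosed.isOpen_compl
        have hΔC : Δ ⊆ Cᶜ := Set.subset_compl_comm.mp hCc
        have hbV : (b' : WithTop E) ≤ μ Cᶜ := hb ⟨Cᶜ, hVo, hΔC, rfl⟩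
        obtain ⟨r, hr⟩ : ∃ r : E, (r : WithTop E) = μ Cᶜ :=
          WithTop.ne_top_iff_exists.mp (aux_fin hμ hfin hC.measurableSet.compl)
        have hur : u = x + r := by
          have h1 : μ Set.univ = μ C + μ Cᶜ := by
            rw [← Set.union_compl_self C]
            exact aux_add hμ hC.measurableSet hC.measurableSet.compl disjoint_compl_right
          have : (u : WithTop E) = ((x + r : E) : WithTop E) := by
            rw [hu, h1, ← hxC, ← hr, WithTop.coe_add]
          exact_mod_cast this
        have hb'r : b' ≤ r := by
          rw [← hr] at hbV
          exact_mod_cast hbV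
        rw [le_sub_iff_add_le, hur]
        exact add_le_add_right hb'r x
      have h3 : t ≤ u - b' := hinnE.2 hub
      have h4 : b' ≤ s := by
        rw [le_sub_iff_add_le, hsplit] at h3
        have : t + b' ≤ t + s := by rwa [add_comm s t] at h3
        exact le_of_add_le_add_left this
      rw [← hs]
      exact_mod_cast h4
  exact fun Δ hΔ => ⟨inner Δ hΔ, outer Δ hΔ⟩
end

section
/- Let X be a locally compact Hausdorff space with Borel σ-algebra B, let E be a monotone complete and normal partially ordered vector space, and let μ : B → E₊ be a set map. Then μ is a finite positive measure if and only if for every positive order continuous functional x′ on E, the real-valued set map Δ ↦ ⟨μ(Δ), x′⟩ is a finite measure. -/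
/-- A finite positive `E`-valued measure on the Borel σ-algebra of `X`: it vanishes at
`∅`, takes positive values, and is σ-additive in the order sense: for pairwise disjoint
Borel sets, the measure of the union is the supremum of the partial sums. -/
def IsFiniteMeasureVal {X : Type*} [MeasurableSpace X] {E : Type*} [AddCommGroup E] [PartialOrder E] [IsOrderedAddMonoid E]
    (μ : Set X → E) : Prop :=
  μ ∅ = 0 ∧ (∀ Δ : Set X, MeasurableSet Δ → 0 ≤ μ Δ) ∧
  ∀ Δ : ℕ → Set X, (∀ n, MeasurableSet (Δ n)) → Pairwise (Function.onFun Disjoint Δ) →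
    IsLUB {y : E | ∃ N : ℕ, y = ∑ n ∈ Finset.range N, μ (Δ n)} (μ (⋃ n, Δ n))

/-- If `a ≤ b` under every positive order continuous functional encompassed by
normality, then `a ≤ b`. -/
lemma le_of_forall_functional {E : Type*} [AddCommGroup E] [PartialOrder E] [IsOrderedAddMonoid E] [Module ℝ E]
    (hnormal : IsNormalPOVS E) {a b : E}
    (h : ∀ φ : E →ₗ[ℝ] ℝ, IsPosOrderContFunctional φ → φ a ≤ φ b) : a ≤ b := by
  have : 0 ≤ b - a := (hnormal (b - a)).mp fun φ hφ => by
    have := h φ hφ; simp only [map_sub]; linarith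
  exact sub_nonneg.mp this

/-- A positive order continuous functional maps suprema of upward directed sets to
suprema. -/
lemma isLUB_image_of_posOrderCont {E : Type*} [AddCommGroup E] [PartialOrder E] [IsOrderedAddMonoid E] [Module ℝ E]
    (φ : E →ₗ[ℝ] ℝ) (hφ : IsPosOrderContFunctional φ) {S : Set E} {y : E}
    (hne : S.Nonempty) (hdir : DirectedOn (· ≤ ·) S) (h : IsLUB S y) :
    IsLUB (φ '' S) (φ y) := by
  set T : Set E := (fun s => y - s) '' S with hT
  have hTne : T.Nonempty := hne.image _
  have hTdir : DirectedOn (· ≥ ·) T := by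
    rintro _ ⟨a, ha, rfl⟩ _ ⟨b, hb, rfl⟩
    obtain ⟨c, hc, hac, hbc⟩ := hdir a ha b hb
    exact ⟨y - c, ⟨c, hc, rfl⟩, sub_le_sub_left hac y, sub_le_sub_left hbc y⟩
  have hTglb : IsGLB T 0 := by
    constructor
    · rintro _ ⟨a, ha, rfl⟩
      exact sub_nonneg.mpr (h.1 ha)
    · intro c hc
      have hyc : y ≤ y - c := h.2 fun s hs => le_sub_comm.mp (hc ⟨s, hs, rfl⟩)
      exact (le_sub_self_iff y).mp hyc
  have himg : IsGLB (φ '' T) 0 := hφ.2 T hTne hTdir hTglb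
  constructor
  · rintro _ ⟨s, hs, rfl⟩
    have h0 : (0 : ℝ) ≤ φ (y - s) := himg.1 ⟨y - s, ⟨s, hs, rfl⟩, rfl⟩
    rw [map_sub] at h0; linarith
  · intro c hc
    have : φ y - c ≤ 0 := by
      refine himg.2 fun t ht => ?_
      obtain ⟨_, ⟨s, hs, rfl⟩, rfl⟩ := ht
      have := hc ⟨s, hs, rfl⟩
      rw [map_sub]; linarith
    linarith

/-- Let `X` be a locally compact Hausdorff space with Borel σ-algebra `B`, `E` a
monotone complete and normal partially ordered vector space, and `μ : B → E₊` a set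
map. Then `μ` is a finite positive measure if and only if for every positive order
continuous functional `x′` on `E` the real-valued set map `Δ ↦ ⟨μ Δ, x′⟩` is a finite
measure. -/
theorem finiteMeasure_iff_functionals
    {X : Type*} [TopologicalSpace X] [MeasurableSpace X] [BorelSpace X]
    [LocallyCompactSpace X] [T2Space X]
    {E : Type*} [AddCommGroup E] [PartialOrder E] [IsOrderedAddMonoid E] [Module ℝ E]
    (hmc : MonotoneComplete E) (hnormal : IsNormalPOVS E)
    (μ : Set X → E) (hpos : ∀ Δ : Set X, MeasurableSet Δ → 0 ≤ μ Δ) :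
    IsFiniteMeasureVal μ ↔
      ∀ φ : E →ₗ[ℝ] ℝ, IsPosOrderContFunctional φ →
        IsFiniteMeasureVal (fun Δ : Set X => φ (μ Δ)) := by
  constructor
  · rintro ⟨h0, hposE, hσ⟩ φ hφ
    refine ⟨by simp [h0], fun Δ hΔ => hφ.1 _ (hpos Δ hΔ), fun Δ hmeas hdisj => ?_⟩
    set S : Set E := {y : E | ∃ N : ℕ, y = ∑ n ∈ Finset.range N, μ (Δ n)} with hS
    have hSne : S.Nonempty := ⟨0, 0, by simp⟩
    have hSdir : DirectedOn (· ≤ ·) S := by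
      rintro _ ⟨N, rfl⟩ _ ⟨M, rfl⟩
      refine ⟨∑ n ∈ Finset.range (max N M), μ (Δ n), ⟨max N M, rfl⟩, ?_, ?_⟩ <;>
        exact Finset.sum_le_sum_of_subset_of_nonneg
          (Finset.range_subset_range.mpr (by omega)) (fun i _ _ => hpos _ (hmeas i))
    have hlub := isLUB_image_of_posOrderCont φ hφ hSne hSdir (hσ Δ hmeas hdisj)
    have hset : {y : ℝ | ∃ N : ℕ, y = ∑ n ∈ Finset.range N, φ (μ (Δ n))} = φ '' S := by
      ext r
      constructor
      · rintro ⟨N, rfl⟩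
        exact ⟨∑ n ∈ Finset.range N, μ (Δ n), ⟨N, rfl⟩, map_sum φ _ _⟩
      · rintro ⟨_, ⟨N, rfl⟩, rfl⟩
        exact ⟨N, map_sum φ _ _⟩
    rw [hset]
    exact hlub
  · intro h
    have hzero : μ ∅ = 0 := by
      refine le_antisymm ?_ (hpos ∅ MeasurableSet.empty)
      refine le_of_forall_functional hnormal fun φ hφ => ?_
      have := (h φ hφ).1
      simp only at this
      rw [this, map_zero]
    refine ⟨hzero, hpos, fun Δ hmeas hdisj => ?_⟩
    set S : Set E := {y : E | ∃ N : ℕ, y = ∑ n ∈ Finset.range N, μ (Δ n)} with hS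
    have hSne : S.Nonempty := ⟨0, 0, by simp⟩
    have hSdir : DirectedOn (· ≤ ·) S := by
      rintro _ ⟨N, rfl⟩ _ ⟨M, rfl⟩
      refine ⟨∑ n ∈ Finset.range (max N M), μ (Δ n), ⟨max N M, rfl⟩, ?_, ?_⟩ <;>
        exact Finset.sum_le_sum_of_subset_of_nonneg
          (Finset.range_subset_range.mpr (by omega)) (fun i _ _ => hpos _ (hmeas i))
    -- every partial sum is below μ (⋃ n, Δ n)
    have hub : μ (⋃ n, Δ n) ∈ upperBounds S := by
      rintro _ ⟨N, rfl⟩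
      refine le_of_forall_functional hnormal fun φ hφ => ?_
      have hlubφ := (h φ hφ).2.2 Δ hmeas hdisj
      have hmem : (∑ n ∈ Finset.range N, φ (μ (Δ n)))
          ∈ {y : ℝ | ∃ N : ℕ, y = ∑ n ∈ Finset.range N, φ (μ (Δ n))} := ⟨N, rfl⟩
      have := hlubφ.1 hmem
      rw [map_sum]
      exact this
    obtain ⟨y, hy⟩ := hmc S hSne hSdir ⟨_, hub⟩
    have h1 : y ≤ μ (⋃ n, Δ n) := hy.2 hub
    have h2 : μ (⋃ n, Δ n) ≤ y := by
      refine le_of_forall_functional hnormal fun φ hφ => ?_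
      have hlubφ := (h φ hφ).2.2 Δ hmeas hdisj
      refine hlubφ.2 ?_
      rintro _ ⟨N, rfl⟩
      rw [← map_sum]
      have hφmono : ∑ n ∈ Finset.range N, μ (Δ n) ≤ y := hy.1 ⟨N, rfl⟩
      have : (0:ℝ) ≤ φ (y - ∑ n ∈ Finset.range N, μ (Δ n)) :=
        hφ.1 _ (sub_nonneg.mpr hφmono)
      rw [map_sub] at this; linarith
    have : μ (⋃ n, Δ n) = y := le_antisymm h2 h1
    rw [this]
    exact hy
end

section
/- Let X be a locally compact Hausdorff space with Borel σ-algebra B, E a monotone complete and normal partially ordered vector space, and μ : B → E₊ a finite positive measure. For a Borel set Δ, μ is outer regular at Δ if and only if for every positive order continuous functional x′ on E the real measure μ_{x′}(·) = ⟨μ(·), x′⟩ is outer regular at Δ. -/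
/-- `μ` is outer regular at `Δ`: `μ Δ` is the infimum of `μ V` over open `V ⊇ Δ`. -/
def OuterRegularAtVal {X : Type*} [TopologicalSpace X] {E : Type*} [Preorder E]
    (μ : Set X → E) (Δ : Set X) : Prop :=
  IsGLB {y : E | ∃ V : Set X, IsOpen V ∧ Δ ⊆ V ∧ y = μ V} (μ Δ)

lemma measure_mono_aux {X : Type*} [MeasurableSpace X] {E : Type*} [AddCommGroup E] [PartialOrder E] [IsOrderedAddMonoid E]
    {μ : Set X → E} (hμ : IsFiniteMeasureVal μ) {A B : Set X}
    (hA : MeasurableSet A) (hB : MeasurableSet B) (hAB : A ⊆ B) : μ A ≤ μ B := by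
  classical
  set f : ℕ → Set X := fun n => if n = 0 then A else if n = 1 then B \ A else ∅ with hf
  have hmeas : ∀ n, MeasurableSet (f n) := by
    intro n; simp only [hf]
    split_ifs
    · exact hA
    · exact hB.diff hA
    · exact MeasurableSet.empty
  have hdisj : Pairwise (Function.onFun Disjoint f) := by
    intro i j hij
    unfold Function.onFun
    simp only [hf]
    rcases i with _|_|i <;> rcases j with _|_|j <;> simp_all <;>
      first
        | exact disjoint_sdiff_self_right
        | exact disjoint_sdiff_self_left
  have hunion : (⋃ n, f n) = B := by
    apply Set.Subset.antisymm
    · refine Set.iUnion_subset fun n => ?_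
      simp only [hf]
      split_ifs
      · exact hAB
      · exact Set.diff_subset
      · exact Set.empty_subset B
    · intro x hx
      by_cases hxA : x ∈ A
      · exact Set.mem_iUnion.2 ⟨0, by simp [hf, hxA]⟩
      · exact Set.mem_iUnion.2 ⟨1, by simp [hf, hx, hxA]⟩
  have hlub := hμ.2.2 f hmeas hdisj
  rw [hunion] at hlub
  exact hlub.1 ⟨1, by simp [hf]⟩

lemma glb_image_of_pos_ordercont {E : Type*} [AddCommGroup E] [PartialOrder E] [IsOrderedAddMonoid E] [Module ℝ E]
    {φ : E →ₗ[ℝ] ℝ} (hφ : IsPosOrderContFunctional φ)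
    {T : Set E} (hne : T.Nonempty) (hdir : DirectedOn (· ≥ ·) T) {a : E}
    (ha : IsGLB T a) : IsGLB (φ '' T) (φ a) := by
  set T' : Set E := (fun x => x - a) '' T with hT'
  have hne' : T'.Nonempty := hne.image _
  have hdir' : DirectedOn (· ≥ ·) T' := by
    rintro _ ⟨x, hx, rfl⟩ _ ⟨y, hy, rfl⟩
    obtain ⟨z, hz, hzx, hzy⟩ := hdir x hx y hy
    exact ⟨z - a, ⟨z, hz, rfl⟩, sub_le_sub_right hzx a, sub_le_sub_right hzy a⟩
  have hglb' : IsGLB T' 0 := by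
    constructor
    · rintro _ ⟨x, hx, rfl⟩
      exact sub_nonneg.2 (ha.1 hx)
    · intro b hb
      have hba : b + a ∈ lowerBounds T := by
        rintro x hx
        exact le_sub_iff_add_le.1 (hb ⟨x, hx, rfl⟩)
      have : b + a ≤ a := ha.2 hba
      exact add_le_iff_nonpos_left.1 this
  have h0 := hφ.2 T' hne' hdir' hglb'
  have himg : φ '' T' = (fun r => r - φ a) '' (φ '' T) := by
    ext r
    constructor
    · rintro ⟨_, ⟨x, hx, rfl⟩, rfl⟩
      exact ⟨φ x, ⟨x, hx, rfl⟩, by simp [map_sub]⟩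
    · rintro ⟨_, ⟨x, hx, rfl⟩, rfl⟩
      exact ⟨x - a, ⟨x, hx, rfl⟩, by simp [map_sub]⟩
  rw [himg] at h0
  constructor
  · rintro _ ⟨x, hx, rfl⟩
    have := h0.1 ⟨φ x, ⟨x, hx, rfl⟩, rfl⟩
    dsimp only at this
    linarith
  · intro b hb
    have : b - φ a ≤ 0 := h0.2 (by rintro _ ⟨r, hr, rfl⟩; have := hb hr; dsimp only; linarith)
    linarith

/-- Let `X` be a locally compact Hausdorff space, `E` a monotone complete and normal
partially ordered vector space, and `μ` a finite positive `E`-valued measure on the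
Borel σ-algebra. For a Borel set `Δ`, `μ` is outer regular at `Δ` if and only if for
every positive order continuous functional `x′` the real measure `⟨μ ·, x′⟩` is outer
regular at `Δ`. -/
theorem outerRegular_iff_functionals
    {X : Type*} [TopologicalSpace X] [MeasurableSpace X] [BorelSpace X]
    [LocallyCompactSpace X] [T2Space X]
    {E : Type*} [AddCommGroup E] [PartialOrder E] [IsOrderedAddMonoid E] [Module ℝ E]
    (hmc : MonotoneComplete E) (hnormal : IsNormalPOVS E)
    (μ : Set X → E) (hμ : IsFiniteMeasureVal μ)
    (Δ : Set X) (hΔ : MeasurableSet Δ) :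
    OuterRegularAtVal μ Δ ↔
      ∀ φ : E →ₗ[ℝ] ℝ, IsPosOrderContFunctional φ →
        OuterRegularAtVal (fun Γ : Set X => φ (μ Γ)) Δ := by
  classical
  have hmono : ∀ {A B : Set X}, MeasurableSet A → MeasurableSet B → A ⊆ B → μ A ≤ μ B :=
    fun hA hB hAB => measure_mono_aux hμ hA hB hAB
  set T : Set E := {y | ∃ V : Set X, IsOpen V ∧ Δ ⊆ V ∧ y = μ V} with hT
  have hne : T.Nonempty := ⟨μ Set.univ, Set.univ, isOpen_univ, Set.subset_univ _, rfl⟩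
  have hdir : DirectedOn (· ≥ ·) T := by
    rintro _ ⟨V, hV, hΔV, rfl⟩ _ ⟨W, hW, hΔW, rfl⟩
    exact ⟨μ (V ∩ W), ⟨V ∩ W, hV.inter hW, Set.subset_inter hΔV hΔW, rfl⟩,
      hmono (hV.inter hW).measurableSet hV.measurableSet Set.inter_subset_left,
      hmono (hV.inter hW).measurableSet hW.measurableSet Set.inter_subset_right⟩
  have himgT : ∀ φ : E →ₗ[ℝ] ℝ,
      {y : ℝ | ∃ V : Set X, IsOpen V ∧ Δ ⊆ V ∧ y = φ (μ V)} = φ '' T := by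
    intro φ
    ext r
    constructor
    · rintro ⟨V, hV, hΔV, rfl⟩
      exact ⟨μ V, ⟨V, hV, hΔV, rfl⟩, rfl⟩
    · rintro ⟨_, ⟨V, hV, hΔV, rfl⟩, rfl⟩
      exact ⟨V, hV, hΔV, rfl⟩
  constructor
  · intro h φ hφ
    show IsGLB {y : ℝ | ∃ V : Set X, IsOpen V ∧ Δ ⊆ V ∧ y = φ (μ V)} (φ (μ Δ))
    rw [himgT φ]
    exact glb_image_of_pos_ordercont hφ hne hdir h
  · intro h
    have hlb : μ Δ ∈ lowerBounds T := by
      rintro _ ⟨V, hV, hΔV, rfl⟩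
      exact hmono hΔ hV.measurableSet hΔV
    have hS : (Neg.neg '' T).Nonempty := hne.image _
    have hSdir : DirectedOn (· ≤ ·) (Neg.neg '' T) := by
      rintro _ ⟨x, hx, rfl⟩ _ ⟨y, hy, rfl⟩
      obtain ⟨z, hz, hzx, hzy⟩ := hdir x hx y hy
      exact ⟨-z, ⟨z, hz, rfl⟩, neg_le_neg hzx, neg_le_neg hzy⟩
    have hSbdd : BddAbove (Neg.neg '' T) :=
      ⟨-μ Δ, by rintro _ ⟨x, hx, rfl⟩; exact neg_le_neg (hlb hx)⟩
    obtain ⟨y, hy⟩ := hmc _ hS hSdir hSbdd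
    have hglbT : IsGLB T (-y) := by
      constructor
      · intro x hx
        have : -x ≤ y := hy.1 ⟨x, hx, rfl⟩
        exact neg_le.1 this
      · intro b hb
        have : y ≤ -b := hy.2 (by rintro _ ⟨x, hx, rfl⟩; exact neg_le_neg (hb hx))
        exact le_neg.1 this
    have key : ∀ φ : E →ₗ[ℝ] ℝ, IsPosOrderContFunctional φ → φ (-y) = φ (μ Δ) := by
      intro φ hφ
      have h1 := glb_image_of_pos_ordercont hφ hne hdir hglbT
      have h2 : IsGLB {r : ℝ | ∃ V : Set X, IsOpen V ∧ Δ ⊆ V ∧ r = φ (μ V)} (φ (μ Δ)) := h φ hφ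
      rw [himgT φ] at h2
      exact h1.unique h2
    have h1 : 0 ≤ -y - μ Δ := (hnormal _).1 (fun φ hφ => by rw [map_sub, key φ hφ]; simp)
    have h2 : 0 ≤ μ Δ - -y := (hnormal _).1 (fun φ hφ => by rw [map_sub, key φ hφ]; simp)
    have heq : -y = μ Δ := le_antisymm (sub_nonneg.1 h2) (sub_nonneg.1 h1)
    show IsGLB T (μ Δ)
    exact heq ▸ hglbT
end

section
/- Let E be a KB-space. Then the regular norm on the space of regular operators on E is a Levi norm: every increasing net of positive regular operators that is bounded in the (regular/operator) norm has a supremum in the regular operators. -/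
/-- A positive operator. -/
def IsPosOp {E : Type*} [AddCommGroup E] [PartialOrder E] [IsOrderedAddMonoid E] [Module ℝ E] (T : E →ₗ[ℝ] E) : Prop :=
  ∀ x : E, 0 ≤ x → 0 ≤ T x

/-- A regular operator: a difference of two positive operators. -/
def IsRegularOp {E : Type*} [AddCommGroup E] [PartialOrder E] [IsOrderedAddMonoid E] [Module ℝ E] (T : E →ₗ[ℝ] E) : Prop :=
  ∃ P Q : E →ₗ[ℝ] E, IsPosOp P ∧ IsPosOp Q ∧ T = P - Q

/-- The order on operators induced by the cone of positive operators. -/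
def opLE {E : Type*} [AddCommGroup E] [PartialOrder E] [IsOrderedAddMonoid E] [Module ℝ E] (T S : E →ₗ[ℝ] E) : Prop :=
  IsPosOp (S - T)

/-- A KB-space: every increasing norm bounded net (equivalently: nonempty upward
directed norm bounded set) in the positive cone is norm convergent to its supremum. -/
def IsKBSpace (E : Type*) [NormedAddCommGroup E] [Lattice E] [HasSolidNorm E]
    [IsOrderedAddMonoid E] : Prop :=
  ∀ S : Set E, S.Nonempty → (∀ x ∈ S, 0 ≤ x) → DirectedOn (· ≤ ·) S →
    (∃ M : ℝ, ∀ x ∈ S, ‖x‖ ≤ M) →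
    ∃ y : E, IsLUB S y ∧ ∀ ε : ℝ, 0 < ε → ∃ x ∈ S, ∀ z ∈ S, x ≤ z → ‖z - y‖ < ε

lemma opLE_trans' {E : Type*} [AddCommGroup E] [PartialOrder E] [IsOrderedAddMonoid E] [Module ℝ E]
    {T S R : E →ₗ[ℝ] E} (h1 : opLE T S) (h2 : opLE S R) : opLE T R := by
  intro x hx
  have e1 := h1 x hx
  have e2 := h2 x hx
  simp only [LinearMap.sub_apply, sub_nonneg] at e1 e2 ⊢
  exact le_trans e1 e2

/-- Let `E` be a KB-space. Then the regular norm on the regular operators on `E` is a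
Levi norm: every increasing net of positive regular operators that is bounded in the
(regular, equivalently operator) norm has a supremum among the regular operators. -/
theorem kbSpace_regularOps_leviNorm {E : Type*} [NormedAddCommGroup E] [Lattice E]
    [HasSolidNorm E] [IsOrderedAddMonoid E]
    [NormedSpace ℝ E] [CompleteSpace E] (hKB : IsKBSpace E)
    (𝒮 : Set (E →ₗ[ℝ] E)) (hne : 𝒮.Nonempty) (hpos : ∀ T ∈ 𝒮, IsPosOp T)
    (hdir : DirectedOn opLE 𝒮)
    (hbdd : ∃ M : ℝ, ∀ T ∈ 𝒮, ∀ x : E, ‖T x‖ ≤ M * ‖x‖) :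
    ∃ U : E →ₗ[ℝ] E, IsRegularOp U ∧ (∀ T ∈ 𝒮, opLE T U) ∧
      ∀ W : E →ₗ[ℝ] E, IsRegularOp W → (∀ T ∈ 𝒮, opLE T W) → opLE U W := by
  classical
  obtain ⟨M, hM⟩ := hbdd
  -- the notion of convergence of the net `T ↦ T x` to `L`
  set Conv : E → E → Prop := fun x L =>
    ∀ ε : ℝ, 0 < ε → ∃ T₀ ∈ 𝒮, ∀ T ∈ 𝒮, opLE T₀ T → ‖T x - L‖ < ε with hConvdef
  -- uniqueness of limits
  have huniq : ∀ x L L', Conv x L → Conv x L' → L = L' := by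
    intro x L L' h h'
    by_contra hne'
    have hp : 0 < ‖L - L'‖ := by
      rw [norm_pos_iff]; exact sub_ne_zero.mpr hne'
    obtain ⟨T₁, hT₁, h1⟩ := h (‖L - L'‖ / 2) (by linarith)
    obtain ⟨T₂, hT₂, h2⟩ := h' (‖L - L'‖ / 2) (by linarith)
    obtain ⟨R, hR, hRT₁, hRT₂⟩ := hdir T₁ hT₁ T₂ hT₂
    have e1 := h1 R hR hRT₁
    have e2 := h2 R hR hRT₂
    have : ‖L - L'‖ ≤ ‖R x - L‖ + ‖R x - L'‖ := by
      have : L - L' = (R x - L') - (R x - L) := by abel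
      rw [this]
      calc ‖(R x - L') - (R x - L)‖ ≤ ‖R x - L'‖ + ‖R x - L‖ := norm_sub_le _ _
        _ = ‖R x - L‖ + ‖R x - L'‖ := by ring
    linarith
  -- convergence for nonnegative vectors, with limit being the LUB of the image
  have hpos_conv : ∀ x : E, 0 ≤ x →
      ∃ L, Conv x L ∧ IsLUB ((fun T : E →ₗ[ℝ] E => T x) '' 𝒮) L := by
    intro x hx
    obtain ⟨T₀, hT₀⟩ := hne
    have hSne : ((fun T : E →ₗ[ℝ] E => T x) '' 𝒮).Nonempty := ⟨T₀ x, ⟨T₀, hT₀, rfl⟩⟩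
    have hSpos : ∀ z ∈ (fun T : E →ₗ[ℝ] E => T x) '' 𝒮, 0 ≤ z := by
      rintro z ⟨T, hT, rfl⟩; exact hpos T hT x hx
    have hSdir : DirectedOn (· ≤ ·) ((fun T : E →ₗ[ℝ] E => T x) '' 𝒮) := by
      rintro z ⟨T, hT, rfl⟩ w ⟨S, hS, rfl⟩
      obtain ⟨R, hR, hRT, hRS⟩ := hdir T hT S hS
      exact ⟨R x, ⟨R, hR, rfl⟩, sub_nonneg.mp (hRT x hx), sub_nonneg.mp (hRS x hx)⟩
    have hSbdd : ∃ C : ℝ, ∀ z ∈ (fun T : E →ₗ[ℝ] E => T x) '' 𝒮, ‖z‖ ≤ C := by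
      refine ⟨M * ‖x‖, ?_⟩
      rintro z ⟨T, hT, rfl⟩; exact hM T hT x
    obtain ⟨y, hy, hconv⟩ := hKB _ hSne hSpos hSdir hSbdd
    refine ⟨y, ?_, hy⟩
    intro ε hε
    obtain ⟨z, ⟨T₁, hT₁, rfl⟩, hz⟩ := hconv ε hε
    refine ⟨T₁, hT₁, fun T hT hle => ?_⟩
    exact hz (T x) ⟨T, hT, rfl⟩ (sub_nonneg.mp (hle x hx))
  -- arithmetic of limits
  have hconv_sub : ∀ x y L K, Conv x L → Conv y K → Conv (x - y) (L - K) := by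
    intro x y L K hx hy ε hε
    obtain ⟨T₁, hT₁, h1⟩ := hx (ε / 2) (by linarith)
    obtain ⟨T₂, hT₂, h2⟩ := hy (ε / 2) (by linarith)
    obtain ⟨R, hR, hRT₁, hRT₂⟩ := hdir T₁ hT₁ T₂ hT₂
    refine ⟨R, hR, fun T hT hle => ?_⟩
    have e1 := h1 T hT (opLE_trans' hRT₁ hle)
    have e2 := h2 T hT (opLE_trans' hRT₂ hle)
    have : T (x - y) - (L - K) = (T x - L) - (T y - K) := by
      rw [map_sub]; abel
    rw [this]
    calc ‖(T x - L) - (T y - K)‖ ≤ ‖T x - L‖ + ‖T y - K‖ := norm_sub_le _ _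
      _ < ε := by linarith
  have hconv_add : ∀ x y L K, Conv x L → Conv y K → Conv (x + y) (L + K) := by
    intro x y L K hx hy ε hε
    obtain ⟨T₁, hT₁, h1⟩ := hx (ε / 2) (by linarith)
    obtain ⟨T₂, hT₂, h2⟩ := hy (ε / 2) (by linarith)
    obtain ⟨R, hR, hRT₁, hRT₂⟩ := hdir T₁ hT₁ T₂ hT₂
    refine ⟨R, hR, fun T hT hle => ?_⟩
    have e1 := h1 T hT (opLE_trans' hRT₁ hle)
    have e2 := h2 T hT (opLE_trans' hRT₂ hle)
    have : T (x + y) - (L + K) = (T x - L) + (T y - K) := by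
      rw [map_add]; abel
    rw [this]
    calc ‖(T x - L) + (T y - K)‖ ≤ ‖T x - L‖ + ‖T y - K‖ := norm_add_le _ _
      _ < ε := by linarith
  have hconv_smul : ∀ (c : ℝ) x L, Conv x L → Conv (c • x) (c • L) := by
    intro c x L hx ε hε
    have hd : (0:ℝ) < ε / (|c| + 1) := by positivity
    obtain ⟨T₁, hT₁, h1⟩ := hx _ hd
    refine ⟨T₁, hT₁, fun T hT hle => ?_⟩
    have e1 := h1 T hT hle
    have : T (c • x) - c • L = c • (T x - L) := by
      rw [map_smul, smul_sub]
    rw [this, norm_smul, Real.norm_eq_abs]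
    have habs : (0:ℝ) ≤ |c| := abs_nonneg c
    calc |c| * ‖T x - L‖ ≤ |c| * (ε / (|c| + 1)) := by
          exact mul_le_mul_of_nonneg_left (le_of_lt e1) habs
      _ < ε := by
          rw [div_eq_inv_mul, ← mul_assoc]
          have h1c : |c| * (|c| + 1)⁻¹ < 1 := by
            rw [mul_inv_lt_iff₀ (by linarith)]; linarith
          nlinarith
  -- every vector has a limit
  have hall : ∀ x : E, ∃ L, Conv x L := by
    intro x
    obtain ⟨L₁, h1, _⟩ := hpos_conv (x⁺) (posPart_nonneg x)
    obtain ⟨L₂, h2, _⟩ := hpos_conv (x⁻) (negPart_nonneg x)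
    refine ⟨L₁ - L₂, ?_⟩
    have := hconv_sub _ _ _ _ h1 h2
    rwa [posPart_sub_negPart] at this
  set Ufun : E → E := fun x => Classical.choose (hall x) with hUfun
  have hU : ∀ x, Conv x (Ufun x) := fun x => Classical.choose_spec (hall x)
  set U : E →ₗ[ℝ] E :=
    { toFun := Ufun
      map_add' := fun x y =>
        huniq (x + y) _ _ (hU (x + y)) (hconv_add x y _ _ (hU x) (hU y))
      map_smul' := fun c x =>
        huniq (c • x) _ _ (hU (c • x)) (hconv_smul c x _ (hU x)) } with hUdef
  have hUapp : ∀ x, U x = Ufun x := fun x => rfl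
  -- for nonnegative x, U x is the LUB of the image
  have hlub : ∀ x : E, 0 ≤ x → IsLUB ((fun T : E →ₗ[ℝ] E => T x) '' 𝒮) (U x) := by
    intro x hx
    obtain ⟨L, hL, hLlub⟩ := hpos_conv x hx
    have : L = Ufun x := huniq x _ _ hL (hU x)
    rwa [this] at hLlub
  refine ⟨U, ?_, ?_, ?_⟩
  · -- regularity: U is positive, U = U - 0
    refine ⟨U, 0, ?_, ?_, by simp⟩
    · intro x hx
      obtain ⟨T₀, hT₀⟩ := hne
      have h1 : T₀ x ≤ U x := (hlub x hx).1 ⟨T₀, hT₀, rfl⟩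
      exact le_trans (hpos T₀ hT₀ x hx) h1
    · intro x _; simp
  · intro T hT x hx
    have h1 : T x ≤ U x := (hlub x hx).1 ⟨T, hT, rfl⟩
    simpa [LinearMap.sub_apply, sub_nonneg] using h1
  · intro W _ hW x hx
    have h1 : U x ≤ W x := by
      apply (hlub x hx).2
      rintro z ⟨T, hT, rfl⟩
      exact sub_nonneg.mp (hW T hT x hx)
    simpa [LinearMap.sub_apply, sub_nonneg] using h1
end

section
/- Let H be a complex Hilbert space and L a strongly closed complex linear subspace of B(H). Then the real vector space L_sa of self-adjoint elements of L, with the ordering inherited from B(H)_sa, is quasi-perfect: it is normal, and every increasing net (T_λ) in the positive cone of L_sa such that sup_λ φ(T_λ) < ∞ for every positive linear functional φ on L_sa has a supremum in L_sa. -/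
variable {H : Type*} [NormedAddCommGroup H] [InnerProductSpace ℂ H] [CompleteSpace H]

/-- A (self-adjoint) operator is positive when `⟨T x, x⟩ ≥ 0` for all `x`. -/
def IsPosOpH (T : H →L[ℂ] H) : Prop :=
  ∀ x : H, 0 ≤ (inner ℂ (T x) x : ℂ).re

/-- The Loewner order on (self-adjoint) operators. -/
def opleH (T S : H →L[ℂ] H) : Prop := IsPosOpH (S - T)

/-- A set of operators is closed in the strong operator topology: any operator in its
SOT-closure (approximated pointwise on finite sets of vectors) belongs to it. -/
def SOTClosed (L : Set (H →L[ℂ] H)) : Prop :=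
  ∀ T : H →L[ℂ] H,
    (∀ ε : ℝ, 0 < ε → ∀ s : Finset H, ∃ S ∈ L, ∀ x ∈ s, ‖S x - T x‖ < ε) → T ∈ L

/-- The self-adjoint part of `L`. -/
def saPart (L : Set (H →L[ℂ] H)) : Set (H →L[ℂ] H) :=
  {T | T ∈ L ∧ IsSelfAdjoint T}

/-- A real-linear functional is positive on `A` if it is nonnegative on the positive
operators belonging to `A`. -/
def PosFunOn (A : Set (H →L[ℂ] H)) (φ : (H →L[ℂ] H) →ₗ[ℝ] ℝ) : Prop :=
  ∀ T ∈ A, IsPosOpH T → 0 ≤ φ T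

/-- A positive functional on `A` is order continuous if it maps every nonempty
downward directed subset of `A` with infimum `0` (relative to `A` in the Loewner order)
to a set of reals with infimum `0`. -/
def PosOrderContFunOn (A : Set (H →L[ℂ] H)) (φ : (H →L[ℂ] H) →ₗ[ℝ] ℝ) : Prop :=
  PosFunOn A φ ∧
  ∀ S : Set (H →L[ℂ] H), S ⊆ A → S.Nonempty →
    DirectedOn (fun T T' => opleH T' T) S →
    ((∀ T ∈ S, IsPosOpH T) ∧
      ∀ C ∈ A, (∀ T ∈ S, opleH C T) → IsPosOpH (-C)) →
    IsGLB (φ '' S) 0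

set_option synthInstance.maxHeartbeats 1000000
set_option maxHeartbeats 1000000
set_option linter.unusedSectionVars false
set_option linter.unusedVariables false

lemma q_sub (T S : H →L[ℂ] H) (x : H) :
    (inner ℂ ((T - S) x) x : ℂ).re = (inner ℂ (T x) x : ℂ).re - (inner ℂ (S x) x : ℂ).re := by
  simp [ContinuousLinearMap.sub_apply, inner_sub_left]


lemma opleH_iff (T S : H →L[ℂ] H) : opleH T S ↔
    ∀ x : H, (inner ℂ (T x) x : ℂ).re ≤ (inner ℂ (S x) x : ℂ).re := by
  unfold opleH IsPosOpH
  constructor <;> intro h x <;> have := h x <;> rw [q_sub] at * <;> linarith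


lemma opleH_refl (T : H →L[ℂ] H) : opleH T T := (opleH_iff T T).2 fun _ => le_refl _

lemma opleH_trans {a b c : H →L[ℂ] H} (h1 : opleH a b) (h2 : opleH b c) : opleH a c :=
  (opleH_iff a c).2 fun x => le_trans ((opleH_iff a b).1 h1 x) ((opleH_iff b c).1 h2 x)


lemma isPositive_of' {T : H →L[ℂ] H} (hsa : IsSelfAdjoint T) (hpos : IsPosOpH T) :
    T.IsPositive := by
  refine ⟨ContinuousLinearMap.isSelfAdjoint_iff_isSymmetric.1 hsa, fun x => ?_⟩
  simpa [ContinuousLinearMap.reApplyInnerSelf] using hpos x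


lemma cs_bound {T : H →L[ℂ] H} (hT : T.IsPositive) (x : H) :
    ‖T x‖ ^ 2 ≤ ‖T‖ * (inner ℂ (T x) x : ℂ).re := by
  set R := CFC.sqrt T with hR
  have hT0 : (0 : H →L[ℂ] H) ≤ T := (ContinuousLinearMap.nonneg_iff_isPositive T).2 hT
  have hR0 : (0 : H →L[ℂ] H) ≤ R := CFC.sqrt_nonneg (a := T)
  have hRsa : IsSelfAdjoint R := ((ContinuousLinearMap.nonneg_iff_isPositive R).1 hR0).isSelfAdjoint
  have hmul : R * R = T := CFC.sqrt_mul_sqrt_self T hT0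
  have hsymm : ∀ u v : H, (inner ℂ (R u) v : ℂ) = inner ℂ u (R v) :=
    fun u v => (ContinuousLinearMap.isSelfAdjoint_iff_isSymmetric.1 hRsa) u v
  have happ : ∀ u : H, T u = R (R u) := by
    intro u; rw [← hmul]; rfl
  have hq : (inner ℂ (T x) x : ℂ).re = ‖R x‖ ^ 2 := by
    rw [happ, hsymm]
    simp [← RCLike.re_to_complex, inner_self_eq_norm_sq]
    norm_cast
  have hnorm : ‖T‖ = ‖R‖ * ‖R‖ := by
    rw [← hmul]
    nth_rewrite 1 [← hRsa.star_eq]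
    exact CStarRing.norm_star_mul_self
  have h1 : ‖T x‖ ≤ ‖R‖ * ‖R x‖ := by
    rw [happ]; exact R.le_opNorm (R x)
  have h2 : ‖R x‖ ^ 2 ≤ ‖R‖ ^2 * ‖x‖^2 := by
    have := R.le_opNorm x
    nlinarith [norm_nonneg (R x), norm_nonneg R, norm_nonneg x]
  rw [hq, hnorm]
  nlinarith [norm_nonneg (R x), norm_nonneg R, norm_nonneg (T x)]


lemma cs_pair' {T : H →L[ℂ] H} (hT : T.IsPositive) (x y : H) :
    ‖(inner ℂ (T x) y : ℂ)‖ ≤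
      Real.sqrt ((inner ℂ (T x) x : ℂ).re) * Real.sqrt ((inner ℂ (T y) y : ℂ).re) := by
  set R := CFC.sqrt T with hR
  have hT0 : (0 : H →L[ℂ] H) ≤ T := (ContinuousLinearMap.nonneg_iff_isPositive T).2 hT
  have hR0 : (0 : H →L[ℂ] H) ≤ R := CFC.sqrt_nonneg (a := T)
  have hRsa : IsSelfAdjoint R := ((ContinuousLinearMap.nonneg_iff_isPositive R).1 hR0).isSelfAdjoint
  have hmul : R * R = T := CFC.sqrt_mul_sqrt_self T hT0
  have hsymm : ∀ u v : H, (inner ℂ (R u) v : ℂ) = inner ℂ u (R v) :=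
    fun u v => (ContinuousLinearMap.isSelfAdjoint_iff_isSymmetric.1 hRsa) u v
  have happ : ∀ u : H, T u = R (R u) := by
    intro u; rw [← hmul]; rfl
  have hq : ∀ u : H, (inner ℂ (T u) u : ℂ).re = ‖R u‖ ^ 2 := by
    intro u; rw [happ, hsymm]; simp [← RCLike.re_to_complex, inner_self_eq_norm_sq]; norm_cast
  have key : (inner ℂ (T x) y : ℂ) = inner ℂ (R x) (R y) := by
    rw [happ, hsymm, ← hsymm]
  rw [key, hq, hq, Real.sqrt_sq (norm_nonneg _), Real.sqrt_sq (norm_nonneg _)]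
  exact norm_inner_le_norm _ _

lemma unif_bound (S : Set (H →L[ℂ] H)) (hpos : ∀ T ∈ S, T.IsPositive)
    (hbdd : ∀ x : H, ∃ c : ℝ, ∀ T ∈ S, (inner ℂ (T x) x : ℂ).re ≤ c) :
    ∃ M : ℝ, 0 ≤ M ∧ ∀ T ∈ S, ‖T‖ ≤ M := by
  have step1 : ∀ x : H, ∃ c : ℝ, ∀ T ∈ S, ‖T x‖ ≤ c := by
    intro x
    obtain ⟨cx, hcx⟩ := hbdd x
    have hpb : ∀ y : H, ∃ C : ℝ, ∀ T : ↥S, ‖(innerSL ℂ ((T : H →L[ℂ] H) x)) y‖ ≤ C := by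
      intro y
      obtain ⟨cy, hcy⟩ := hbdd y
      refine ⟨Real.sqrt cx * Real.sqrt cy, fun T => ?_⟩
      have h1 := cs_pair' (hpos T.1 T.2) x y
      have h2 : Real.sqrt ((inner ℂ (T.1 x) x : ℂ).re) ≤ Real.sqrt cx :=
        Real.sqrt_le_sqrt (hcx T.1 T.2)
      have h3 : Real.sqrt ((inner ℂ (T.1 y) y : ℂ).re) ≤ Real.sqrt cy :=
        Real.sqrt_le_sqrt (hcy T.1 T.2)
      calc ‖(innerSL ℂ (T.1 x)) y‖ = ‖(inner ℂ (T.1 x) y : ℂ)‖ := rfl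
        _ ≤ _ := h1
        _ ≤ Real.sqrt cx * Real.sqrt cy := by
            apply mul_le_mul h2 h3 (Real.sqrt_nonneg _) (Real.sqrt_nonneg _)
    obtain ⟨C, hC⟩ := banach_steinhaus (g := fun T : ↥S => innerSL ℂ ((T : H →L[ℂ] H) x))
      (fun y => hpb y)
    refine ⟨C, fun T hT => ?_⟩
    have := hC ⟨T, hT⟩
    rwa [innerSL_apply_norm] at this
  obtain ⟨M₀, hM₀⟩ := banach_steinhaus (g := fun T : ↥S => (T : H →L[ℂ] H))
    (fun x => by obtain ⟨c, hc⟩ := step1 x; exact ⟨c, fun T => hc T.1 T.2⟩)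
  exact ⟨max M₀ 0, le_max_right _ _, fun T hT => le_trans (hM₀ ⟨T, hT⟩) (le_max_left _ _)⟩


noncomputable def qfun (x : H) : (H →L[ℂ] H) →ₗ[ℝ] ℝ where
  toFun T := (inner ℂ (T x) x : ℂ).re
  map_add' T S := by simp [inner_add_left]
  map_smul' r T := by
    have h : (r • T) x = ((r : ℂ)) • T x := by
      rw [ContinuousLinearMap.smul_apply]
      exact (algebraMap_smul ℂ r (T x)).symm ▸ by norm_num [Complex.coe_algebraMap]
    simp only [h, inner_smul_left]
    simp [Complex.mul_re]


def SIdx (S : Set (H →L[ℂ] H)) : Type _ := ↥S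

def SIdx.val {S : Set (H →L[ℂ] H)} (T : SIdx S) : H →L[ℂ] H := Subtype.val T

lemma SIdx.mem {S : Set (H →L[ℂ] H)} (T : SIdx S) : T.val ∈ S := Subtype.prop T

def SIdx.mk {S : Set (H →L[ℂ] H)} (T : H →L[ℂ] H) (hT : T ∈ S) : SIdx S := ⟨T, hT⟩

@[simp] lemma SIdx.mk_val {S : Set (H →L[ℂ] H)} (T : H →L[ℂ] H) (hT : T ∈ S) :
    (SIdx.mk T hT).val = T := rfl

instance (S : Set (H →L[ℂ] H)) : Preorder (SIdx S) where
  le a b := opleH a.val b.val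
  lt a b := opleH a.val b.val ∧ ¬ opleH b.val a.val
  le_refl a := opleH_refl a.val
  le_trans _ _ _ := opleH_trans
  lt_iff_le_not_ge _ _ := Iff.rfl

lemma SIdx.le_iff {S : Set (H →L[ℂ] H)} (a b : SIdx S) : a ≤ b ↔ opleH a.val b.val := Iff.rfl

open Filter Topology

lemma key_sup (L : Submodule ℂ (H →L[ℂ] H)) (hL : SOTClosed (L : Set (H →L[ℂ] H)))
    (S : Set (H →L[ℂ] H)) (hmem : ∀ T ∈ S, T ∈ L) (hsa : ∀ T ∈ S, IsSelfAdjoint T)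
    (hpos : ∀ T ∈ S, IsPosOpH T) (hne : S.Nonempty) (hdir : DirectedOn opleH S)
    (hbdd : ∀ x : H, ∃ c : ℝ, ∀ T ∈ S, (inner ℂ (T x) x : ℂ).re ≤ c) :
    ∃ U : H →L[ℂ] H, U ∈ L ∧ IsSelfAdjoint U ∧
      ∀ x : H, IsLUB ((fun T : H →L[ℂ] H => (inner ℂ (T x) x : ℂ).re) '' S)
        ((inner ℂ (U x) x : ℂ).re) := by
  obtain ⟨M, hM0, hM⟩ := unif_bound S (fun T hT => isPositive_of' (hsa T hT) (hpos T hT)) hbdd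
  haveI : Nonempty (SIdx S) := ⟨SIdx.mk hne.choose hne.choose_spec⟩
  haveI : IsDirected (SIdx S) (· ≤ ·) := ⟨fun a b => by
    obtain ⟨c, hc, h1, h2⟩ := hdir a.val a.mem b.val b.mem
    exact ⟨SIdx.mk c hc, h1, h2⟩⟩
  have hmono : ∀ (a b : SIdx S), a ≤ b → ∀ x : H,
      (inner ℂ (a.val x) x : ℂ).re ≤ (inner ℂ (b.val x) x : ℂ).re :=
    fun a b hab x => (opleH_iff a.val b.val).1 hab x
  -- pointwise Cauchy
  have hcauchy : ∀ x : H, Cauchy (Filter.map (fun T : SIdx S => T.val x) Filter.atTop) := by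
    intro x
    rw [Metric.cauchy_iff]
    refine ⟨Filter.map_neBot, fun ε hε => ?_⟩
    obtain ⟨c₀, hc₀⟩ := hbdd x
    have hbddA : BddAbove ((fun T : H →L[ℂ] H => (inner ℂ (T x) x : ℂ).re) '' S) := by
      refine ⟨c₀, ?_⟩
      rintro r ⟨T, hT, rfl⟩
      exact hc₀ T hT
    set c := sSup ((fun T : H →L[ℂ] H => (inner ℂ (T x) x : ℂ).re) '' S) with hc
    have hK : (0:ℝ) < 2 * M + 1 := by linarith
    set δ := ε ^ 2 / (8 * (2 * M + 1)) with hδ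
    have hδ0 : 0 < δ := by positivity
    obtain ⟨v, hvmem, hv⟩ : ∃ v ∈ (fun T : H →L[ℂ] H => (inner ℂ (T x) x : ℂ).re) '' S,
        c - δ < v := exists_lt_of_lt_csSup (hne.image _) (by linarith)
    obtain ⟨T₀, hT₀S, rfl⟩ := hvmem
    simp only at hv
    have est : ∀ T : SIdx S, SIdx.mk T₀ hT₀S ≤ T →
        ‖T.val x - T₀ x‖ ^ 2 ≤ (2 * M + 1) * δ := by
      intro T hT
      have hTpos : IsPosOpH (T.val - T₀) := hT
      have hA : (T.val - T₀).IsPositive :=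
        isPositive_of' ((hsa T.val T.mem).sub (hsa T₀ hT₀S)) hTpos
      have h1 := cs_bound hA x
      have hAx : (T.val - T₀) x = T.val x - T₀ x := rfl
      have hqA : (inner ℂ ((T.val - T₀) x) x : ℂ).re
          = (inner ℂ (T.val x) x : ℂ).re - (inner ℂ (T₀ x) x : ℂ).re := q_sub _ _ _
      have hqle : (inner ℂ (T.val x) x : ℂ).re ≤ c := le_csSup hbddA ⟨T.val, T.mem, rfl⟩
      have hq0 : 0 ≤ (inner ℂ ((T.val - T₀) x) x : ℂ).re := hTpos x
      have hqδ : (inner ℂ ((T.val - T₀) x) x : ℂ).re ≤ δ := by rw [hqA]; linarith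
      have hnA : ‖T.val - T₀‖ ≤ 2 * M + 1 := by
        have := norm_sub_le T.val T₀
        have h2 := hM T.val T.mem
        have h3 := hM T₀ hT₀S
        linarith
      calc ‖T.val x - T₀ x‖ ^ 2 = ‖(T.val - T₀) x‖ ^ 2 := by rw [hAx]
        _ ≤ ‖T.val - T₀‖ * (inner ℂ ((T.val - T₀) x) x : ℂ).re := h1
        _ ≤ (2 * M + 1) * δ := by
            apply mul_le_mul hnA hqδ hq0 (by linarith)
    refine ⟨(fun T : SIdx S => T.val x) '' Set.Ici (SIdx.mk T₀ hT₀S),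
      Filter.image_mem_map (Filter.Ici_mem_atTop _), ?_⟩
    rintro a ⟨Ta, hTa, rfl⟩ b ⟨Tb, hTb, rfl⟩
    have ha := est Ta hTa
    have hb := est Tb hTb
    have htri : dist (Ta.val x) (Tb.val x) ≤ ‖Ta.val x - T₀ x‖ + ‖Tb.val x - T₀ x‖ := by
      rw [dist_eq_norm]
      calc ‖Ta.val x - Tb.val x‖ = ‖(Ta.val x - T₀ x) - (Tb.val x - T₀ x)‖ := by rw [sub_sub_sub_cancel_right]
        _ ≤ _ := norm_sub_le _ _
    have hKδ : (2 * M + 1) * δ = ε ^ 2 / 8 := by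
      rw [hδ]; field_simp
    rw [hKδ] at ha hb
    nlinarith [norm_nonneg (Ta.val x - T₀ x), norm_nonneg (Tb.val x - T₀ x),
      sq_nonneg (‖Ta.val x - T₀ x‖ - ‖Tb.val x - T₀ x‖), hε]
  have hlim : ∀ x : H, ∃ y : H,
      Filter.Tendsto (fun T : SIdx S => T.val x) Filter.atTop (𝓝 y) :=
    fun x => CompleteSpace.complete (hcauchy x)
  choose F hF using hlim
  have hadd : ∀ x y : H, F (x + y) = F x + F y := by
    intro x y
    refine tendsto_nhds_unique (hF (x + y)) ?_
    have : (fun T : SIdx S => T.val (x + y)) = fun T : SIdx S => T.val x + T.val y := by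
      funext T; exact map_add T.val x y
    rw [this]
    exact (hF x).add (hF y)
  have hsmul : ∀ (a : ℂ) (x : H), F (a • x) = a • F x := by
    intro a x
    refine tendsto_nhds_unique (hF (a • x)) ?_
    have : (fun T : SIdx S => T.val (a • x)) = fun T : SIdx S => a • T.val x := by
      funext T; exact map_smul T.val a x
    rw [this]
    exact (hF x).const_smul a
  have hFb : ∀ x : H, ‖F x‖ ≤ M * ‖x‖ := by
    intro x
    refine le_of_tendsto (hF x).norm (Filter.Eventually.of_forall fun T => ?_)
    exact (T.val.le_opNorm x).trans
      (mul_le_mul_of_nonneg_right (hM T.val T.mem) (norm_nonneg x))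
  set U : H →L[ℂ] H := LinearMap.mkContinuous
    { toFun := F, map_add' := hadd, map_smul' := hsmul } M hFb with hUdef
  have hU : ∀ x : H, Filter.Tendsto (fun T : SIdx S => T.val x) Filter.atTop (𝓝 (U x)) := hF
  refine ⟨U, ?_, ?_, ?_⟩
  · -- membership
    apply hL
    intro ε hε s
    haveI : (Filter.atTop (α := SIdx S)).NeBot := Filter.atTop_neBot
    have hev : ∀ᶠ T : SIdx S in Filter.atTop, ∀ y ∈ s, ‖T.val y - U y‖ < ε := by
      refine (Filter.eventually_all_finset s (l := Filter.atTop (α := SIdx S))).2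
        fun y hy => ((Metric.tendsto_nhds.mp (hU y)) ε hε).mono fun T hT => ?_
      rwa [dist_eq_norm] at hT
    obtain ⟨T, hT⟩ := hev.exists
    exact ⟨T.val, hmem T.val T.mem, hT⟩
  · -- self-adjoint
    rw [ContinuousLinearMap.isSelfAdjoint_iff_isSymmetric]
    intro x y
    have h1 : Filter.Tendsto (fun T : SIdx S => (inner ℂ (T.val x) y : ℂ)) Filter.atTop
        (𝓝 (inner ℂ (U x) y)) := (hU x).inner tendsto_const_nhds
    have h2 : Filter.Tendsto (fun T : SIdx S => (inner ℂ x (T.val y) : ℂ)) Filter.atTop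
        (𝓝 (inner ℂ x (U y))) := tendsto_const_nhds.inner (hU y)
    have heq : (fun T : SIdx S => (inner ℂ (T.val x) y : ℂ))
        = fun T : SIdx S => (inner ℂ x (T.val y) : ℂ) := by
      funext T
      exact (ContinuousLinearMap.isSelfAdjoint_iff_isSymmetric.1 (hsa T.val T.mem)) x y
    rw [heq] at h1
    exact tendsto_nhds_unique h1 h2
  · -- LUB
    intro x
    have hq : Filter.Tendsto (fun T : SIdx S => (inner ℂ (T.val x) x : ℂ).re) Filter.atTop
        (𝓝 ((inner ℂ (U x) x : ℂ).re)) :=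
      (Complex.continuous_re.tendsto _).comp ((hU x).inner tendsto_const_nhds)
    constructor
    · rintro r ⟨T, hT, rfl⟩
      refine ge_of_tendsto hq ?_
      filter_upwards [Filter.Ici_mem_atTop (SIdx.mk T hT)] with b hb
      exact hmono (SIdx.mk T hT) b hb x
    · intro r hr
      exact le_of_tendsto hq (Filter.Eventually.of_forall fun T => hr ⟨T.val, T.mem, rfl⟩)

lemma glb_zero (L : Submodule ℂ (H →L[ℂ] H)) (hL : SOTClosed (L : Set (H →L[ℂ] H)))
    (S : Set (H →L[ℂ] H)) (hsub : S ⊆ saPart (L : Set (H →L[ℂ] H)))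
    (hne : S.Nonempty) (hdir : DirectedOn (fun T T' => opleH T' T) S)
    (hpos : ∀ T ∈ S, IsPosOpH T)
    (hlb : ∀ C ∈ saPart (L : Set (H →L[ℂ] H)), (∀ T ∈ S, opleH C T) → IsPosOpH (-C))
    (x : H) : IsGLB ((fun T : H →L[ℂ] H => (inner ℂ (T x) x : ℂ).re) '' S) 0 := by
  obtain ⟨T₀, hT₀⟩ := hne
  set S' := (fun T : H →L[ℂ] H => T₀ - T) '' {T | T ∈ S ∧ opleH T T₀} with hS'
  obtain ⟨U, hUL, hUsa, hlub⟩ := key_sup L hL S'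
    (by rintro _ ⟨T, ⟨hTS, _⟩, rfl⟩; exact sub_mem (hsub hT₀).1 (hsub hTS).1)
    (by rintro _ ⟨T, ⟨hTS, _⟩, rfl⟩; exact ((hsub hT₀).2).sub ((hsub hTS).2))
    (by rintro _ ⟨T, ⟨hTS, hTle⟩, rfl⟩; exact hTle)
    ⟨T₀ - T₀, ⟨T₀, ⟨hT₀, opleH_refl T₀⟩, rfl⟩⟩
    (by
      rintro _ ⟨T₁, ⟨h1S, h1le⟩, rfl⟩ _ ⟨T₂, ⟨h2S, h2le⟩, rfl⟩
      obtain ⟨T₃, h3S, h31, h32⟩ := hdir T₁ h1S T₂ h2S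
      refine ⟨T₀ - T₃, ⟨T₃, ⟨h3S, opleH_trans h31 h1le⟩, rfl⟩, ?_, ?_⟩
      · rw [opleH_iff]; intro y
        rw [q_sub, q_sub]
        have := (opleH_iff T₃ T₁).1 h31 y
        linarith
      · rw [opleH_iff]; intro y
        rw [q_sub, q_sub]
        have := (opleH_iff T₃ T₂).1 h32 y
        linarith)
    (by
      intro y
      refine ⟨(inner ℂ (T₀ y) y : ℂ).re, ?_⟩
      rintro _ ⟨T, ⟨hTS, _⟩, rfl⟩
      have := hpos T hTS y
      show (inner ℂ ((T₀ - T) y) y : ℂ).re ≤ (inner ℂ (T₀ y) y : ℂ).re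
      rw [q_sub]
      linarith)
  set C := T₀ - U with hC
  have hCsa : IsSelfAdjoint C := ((hsub hT₀).2).sub hUsa
  have hCL : C ∈ L := sub_mem (hsub hT₀).1 hUL
  have hq0 : ∀ y : H, 0 ≤ (inner ℂ (C y) y : ℂ).re := by
    intro y
    rw [hC, q_sub]
    have hub : (inner ℂ (U y) y : ℂ).re ≤ (inner ℂ (T₀ y) y : ℂ).re := by
      refine (hlub y).2 ?_
      rintro _ ⟨_, ⟨T, ⟨hTS, _⟩, rfl⟩, rfl⟩
      have := hpos T hTS y
      show (inner ℂ ((T₀ - T) y) y : ℂ).re ≤ (inner ℂ (T₀ y) y : ℂ).re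
      rw [q_sub]
      linarith
    linarith
  have hClb : ∀ T ∈ S, opleH C T := by
    intro T hTS
    obtain ⟨T₃, h3S, h3T, h30⟩ := hdir T hTS T₀ hT₀
    refine opleH_trans ?_ h3T
    rw [opleH_iff]; intro y
    have h1 : (inner ℂ ((T₀ - T₃) y) y : ℂ).re ≤ (inner ℂ (U y) y : ℂ).re :=
      (hlub y).1 ⟨T₀ - T₃, ⟨T₃, ⟨h3S, h30⟩, rfl⟩, rfl⟩
    rw [q_sub] at h1
    rw [hC, q_sub]
    linarith
  have hCneg : IsPosOpH (-C) := hlb C ⟨hCL, hCsa⟩ hClb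
  have hCzero : ∀ y : H, (inner ℂ (C y) y : ℂ).re = 0 := by
    intro y
    have h1 := hq0 y
    have h2 := hCneg y
    have h3 : (inner ℂ ((-C) y) y : ℂ).re = -(inner ℂ (C y) y : ℂ).re := by
      rw [ContinuousLinearMap.neg_apply, inner_neg_left]
      simp
    rw [h3] at h2
    linarith
  constructor
  · rintro r ⟨T, hTS, rfl⟩
    exact hpos T hTS x
  · intro b hb
    by_contra hcon
    push_neg at hcon
    have hqU : (inner ℂ (U x) x : ℂ).re = (inner ℂ (T₀ x) x : ℂ).re := by
      have := hCzero x
      rw [hC, q_sub] at this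
      linarith
    have hlt : (inner ℂ (U x) x : ℂ).re - b < (inner ℂ (U x) x : ℂ).re := by linarith
    obtain ⟨v, hv, hv2, _⟩ := (hlub x).exists_between hlt
    obtain ⟨_, ⟨T, ⟨hTS, hTle⟩, rfl⟩, rfl⟩ := hv
    have hbT := hb ⟨T, hTS, rfl⟩
    have hv2' : (inner ℂ (U x) x : ℂ).re - b < (inner ℂ ((T₀ - T) x) x : ℂ).re := hv2
    rw [q_sub] at hv2'
    linarith


/-- Let `H` be a complex Hilbert space and `L` a strongly closed complex linear subspace
of `B(H)`. Then the self-adjoint part `L_sa` of `L`, with the order inherited from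
`B(H)_sa`, is quasi-perfect: it is normal, and every increasing net in its positive cone
on which every positive linear functional is bounded has a supremum in `L_sa`. -/
theorem saPart_quasiPerfect (L : Submodule ℂ (H →L[ℂ] H))
    (hL : SOTClosed (L : Set (H →L[ℂ] H))) :
    -- normality of `L_sa`
    (∀ T : H →L[ℂ] H, T ∈ saPart (L : Set (H →L[ℂ] H)) →
      ((∀ φ : (H →L[ℂ] H) →ₗ[ℝ] ℝ,
          PosOrderContFunOn (saPart (L : Set (H →L[ℂ] H))) φ → 0 ≤ φ T)
        ↔ IsPosOpH T)) ∧
    -- every increasing net in the positive cone of `L_sa` on which all positive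
    -- functionals are bounded has a supremum in `L_sa`
    ∀ S : Set (H →L[ℂ] H),
      (∀ T ∈ S, T ∈ saPart (L : Set (H →L[ℂ] H)) ∧ IsPosOpH T) →
      S.Nonempty → DirectedOn opleH S →
      (∀ φ : (H →L[ℂ] H) →ₗ[ℝ] ℝ,
        PosFunOn (saPart (L : Set (H →L[ℂ] H))) φ → BddAbove (φ '' S)) →
      ∃ U ∈ saPart (L : Set (H →L[ℂ] H)),
        (∀ T ∈ S, opleH T U) ∧
        ∀ W ∈ saPart (L : Set (H →L[ℂ] H)),
          (∀ T ∈ S, opleH T W) → opleH U W := by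
  constructor
  · intro T hT
    constructor
    · intro h x
      have hφ : PosOrderContFunOn (saPart (L : Set (H →L[ℂ] H))) (qfun x) := by
        refine ⟨fun T' _ hT' => hT' x, ?_⟩
        intro S hsub hne hdir hconj
        exact glb_zero L hL S hsub hne hdir hconj.1 hconj.2 x
      exact h (qfun x) hφ
    · intro hpos φ hφ
      exact hφ.1 T hT hpos
  · intro S hS hne hdir hbddφ
    obtain ⟨U, hUL, hUsa, hlub⟩ := key_sup L hL S (fun T hT => (hS T hT).1.1)
      (fun T hT => (hS T hT).1.2) (fun T hT => (hS T hT).2) hne hdir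
      (fun x => by
        obtain ⟨c, hc⟩ := hbddφ (qfun x) (fun T' _ hT' => hT' x)
        exact ⟨c, fun T hT => hc ⟨T, hT, rfl⟩⟩)
    refine ⟨U, ⟨hUL, hUsa⟩, fun T hT => ?_, fun W hW hWub => ?_⟩
    · rw [opleH_iff]; intro x
      exact (hlub x).1 ⟨T, hT, rfl⟩
    · rw [opleH_iff]; intro x
      refine (hlub x).2 ?_
      rintro r ⟨T, hTS, rfl⟩
      exact (opleH_iff T W).1 (hWub T hTS) x
end

section
/- Let X be a locally compact Hausdorff space, E a quasi-perfect partially ordered vector space, and π : C_0(X) → E a positive linear operator. Then the set {π(f) : f ∈ C_c(X), 0 ≤ f ≤ 1} is bounded above in E (indeed has a supremum). -/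
open ZeroAtInfty

/-- A quasi-perfect partially ordered vector space: it is normal, and every increasing
net (equivalently: nonempty upward directed set) in the positive cone on which every
positive linear functional is bounded has a supremum. -/
def QuasiPerfect (E : Type*) [AddCommGroup E] [PartialOrder E] [IsOrderedAddMonoid E] [Module ℝ E] : Prop :=
  IsNormalPOVS E ∧
  ∀ S : Set E, S.Nonempty → (∀ x ∈ S, 0 ≤ x) → DirectedOn (· ≤ ·) S →
    (∀ φ : E →ₗ[ℝ] ℝ, (∀ x : E, 0 ≤ x → 0 ≤ φ x) → BddAbove (φ '' S)) →
    ∃ y : E, IsLUB S y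

open Filter Topology in
/-- Pointwise maximum of two functions in `C₀(X, ℝ)`. -/
noncomputable def c0max {X : Type*} [TopologicalSpace X] (f g : C₀(X, ℝ)) : C₀(X, ℝ) where
  toFun := fun x => max (f x) (g x)
  continuous_toFun := f.continuous.max g.continuous
  zero_at_infty' := by
    simpa using (zero_at_infty f).max (zero_at_infty g)

/-- Evaluation at a point, as a continuous linear map on `C₀(X, ℝ)`. -/
noncomputable def evalC0 {X : Type*} [TopologicalSpace X] (x : X) : C₀(X, ℝ) →L[ℝ] ℝ :=
  LinearMap.mkContinuous
    { toFun := fun f => f x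
      map_add' := fun f g => rfl
      map_smul' := fun c f => rfl } 1
    (fun f => by
      have h : ‖f.toBCF x‖ ≤ ‖f.toBCF‖ := f.toBCF.norm_coe_le_norm x
      simpa [ZeroAtInftyContinuousMap.norm_toBCF_eq_norm] using h)

/-- Let `X` be a locally compact Hausdorff space, `E` a quasi-perfect partially ordered
vector space, and `π : C₀(X) → E` a positive linear operator. Then the set
`{π f : f ∈ C_c(X), 0 ≤ f ≤ 1}` has a supremum in `E` (in particular it is bounded
above). -/
theorem quasiPerfect_bddAbove
    {X : Type*} [TopologicalSpace X] [MeasurableSpace X] [BorelSpace X]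
    [LocallyCompactSpace X] [T2Space X]
    {E : Type*} [AddCommGroup E] [PartialOrder E] [IsOrderedAddMonoid E] [Module ℝ E] [PosSMulStrictMono ℝ E]
    (hqp : QuasiPerfect E)
    (π : C₀(X, ℝ) →ₗ[ℝ] E) (hπ : ∀ f : C₀(X, ℝ), (∀ x, 0 ≤ f x) → 0 ≤ π f) :
    ∃ y : E, IsLUB {z : E | ∃ f : C₀(X, ℝ), HasCompactSupport ⇑f ∧
      (∀ x, 0 ≤ f x ∧ f x ≤ 1) ∧ z = π f} y := by
  set S : Set E := {z : E | ∃ f : C₀(X, ℝ), HasCompactSupport ⇑f ∧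
      (∀ x, 0 ≤ f x ∧ f x ≤ 1) ∧ z = π f} with hS
  -- monotonicity of π for the pointwise order
  have hmono : ∀ f g : C₀(X, ℝ), (∀ x, f x ≤ g x) → π f ≤ π g := by
    intro f g h
    have h0 : (0 : E) ≤ π (g - f) := hπ _ (fun x => by
      have hx : (g - f) x = g x - f x := rfl
      rw [hx]; linarith [h x])
    rw [map_sub π g f] at h0
    exact sub_nonneg.mp h0
  -- the zero function belongs
  have h0mem : π 0 ∈ S := by
    refine ⟨0, ?_, fun x => ⟨le_refl _, zero_le_one⟩, rfl⟩
    have : ⇑(0 : C₀(X, ℝ)) = (fun _ : X => (0 : ℝ)) := rfl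
    rw [this]
    simp [HasCompactSupport, tsupport]
  refine hqp.2 S ⟨π 0, h0mem⟩ ?_ ?_ ?_
  · rintro z ⟨f, hfc, hf01, rfl⟩
    exact hπ f (fun x => (hf01 x).1)
  · rintro z ⟨f, hfc, hf01, rfl⟩ w ⟨g, hgc, hg01, rfl⟩
    refine ⟨π (c0max f g), ⟨c0max f g, ?_, ?_, rfl⟩, ?_, ?_⟩
    · -- compact support of the max
      have hsub : Function.support ⇑(c0max f g) ⊆ tsupport ⇑f ∪ tsupport ⇑g := by
        intro x hx
        by_contra hc
        simp only [Set.mem_union, not_or] at hc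
        have hf0 : f x = 0 := image_eq_zero_of_notMem_tsupport hc.1
        have hg0 : g x = 0 := image_eq_zero_of_notMem_tsupport hc.2
        have : (c0max f g) x = 0 := by
          show max (f x) (g x) = 0
          rw [hf0, hg0, max_self]
        exact hx this
      have hcl : IsClosed (tsupport ⇑f ∪ tsupport ⇑g) :=
        isClosed_closure.union isClosed_closure
      have : tsupport ⇑(c0max f g) ⊆ tsupport ⇑f ∪ tsupport ⇑g :=
        closure_minimal hsub hcl
      exact IsCompact.of_isClosed_subset (hfc.union hgc) (isClosed_tsupport _) this
    · intro x
      exact ⟨le_max_of_le_left (hf01 x).1, max_le (hf01 x).2 (hg01 x).2⟩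
    · exact hmono f (c0max f g) (fun x => le_max_left _ _)
    · exact hmono g (c0max f g) (fun x => le_max_right _ _)
  · -- boundedness under every positive functional
    intro φ hφ
    by_contra hb
    set ψ : C₀(X, ℝ) →ₗ[ℝ] ℝ := φ.comp π with hψ
    have hψpos : ∀ f : C₀(X, ℝ), (∀ x, 0 ≤ f x) → 0 ≤ ψ f :=
      fun f hf => hφ _ (hπ f hf)
    have hex : ∀ n : ℕ, ∃ f : C₀(X, ℝ), HasCompactSupport ⇑f ∧
        (∀ x, 0 ≤ f x ∧ f x ≤ 1) ∧ (4 : ℝ) ^ n < ψ f := by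
      intro n
      obtain ⟨r, ⟨z, ⟨f, h1, h2, rfl⟩, rfl⟩, hr⟩ := (not_bddAbove_iff.mp hb) ((4 : ℝ) ^ n)
      exact ⟨f, h1, h2, hr⟩
    choose F hFc hF01 hFψ using hex
    -- norms are bounded by 1
    have hFnorm : ∀ n, ‖F n‖ ≤ 1 := by
      intro n
      rw [← ZeroAtInftyContinuousMap.norm_toBCF_eq_norm]
      refine (BoundedContinuousFunction.norm_le zero_le_one).mpr (fun x => ?_)
      have := hF01 n x
      have hx : (F n).toBCF x = F n x := rfl
      rw [hx, Real.norm_eq_abs, abs_le]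
      constructor <;> linarith [this.1, this.2]
    have hsum : Summable (fun n : ℕ => ((2 : ℝ)⁻¹) ^ n • F n) := by
      refine Summable.of_norm ?_
      refine Summable.of_nonneg_of_le (fun n => norm_nonneg _)
        (fun n => ?_) (summable_geometric_of_lt_one (by norm_num) (by norm_num : (2:ℝ)⁻¹ < 1))
      rw [norm_smul (((2 : ℝ)⁻¹) ^ n) (F n)]
      have h2 : ‖((2 : ℝ)⁻¹) ^ n‖ = ((2 : ℝ)⁻¹) ^ n := by
        rw [Real.norm_eq_abs, abs_of_nonneg]; positivity
      rw [h2]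
      calc ((2:ℝ)⁻¹) ^ n * ‖F n‖ ≤ ((2:ℝ)⁻¹) ^ n * 1 := by
            apply mul_le_mul_of_nonneg_left (hFnorm n); positivity
        _ = ((2:ℝ)⁻¹) ^ n := mul_one _
    set g : C₀(X, ℝ) := ∑' n : ℕ, ((2 : ℝ)⁻¹) ^ n • F n with hg
    have hhas : HasSum (fun n : ℕ => ((2 : ℝ)⁻¹) ^ n • F n) g := hsum.hasSum
    -- pointwise
    have hpt : ∀ x : X, HasSum (fun n : ℕ => ((2 : ℝ)⁻¹) ^ n * F n x) (g x) := by
      intro x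
      have := hhas.mapL (evalC0 x)
      convert this using 1 <;> rfl
    have hge : ∀ n : ℕ, ∀ x : X, ((2 : ℝ)⁻¹) ^ n * F n x ≤ g x := by
      intro n x
      refine le_hasSum (hpt x) n (fun m _ => ?_)
      have := (hF01 m x).1
      positivity
    -- ψ g is an upper bound for 2 ^ n for all n — contradiction
    have hfinal : ∀ n : ℕ, (2 : ℝ) ^ n < ψ g := by
      intro n
      have h1 : ψ (((2 : ℝ)⁻¹) ^ n • F n) ≤ ψ g := by
        have hd : ∀ x, 0 ≤ (g - ((2 : ℝ)⁻¹) ^ n • F n) x := by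
          intro x
          have hx : (g - ((2 : ℝ)⁻¹) ^ n • F n) x = g x - ((2 : ℝ)⁻¹) ^ n * F n x := rfl
          rw [hx]
          linarith [hge n x]
        have := hψpos _ hd
        rw [map_sub] at this
        linarith
      have h2 : ψ (((2 : ℝ)⁻¹) ^ n • F n) = ((2 : ℝ)⁻¹) ^ n * ψ (F n) := by
        rw [map_smul]; rfl
      have h3 : ((2 : ℝ)⁻¹) ^ n * (4 : ℝ) ^ n < ((2 : ℝ)⁻¹) ^ n * ψ (F n) := by
        apply mul_lt_mul_of_pos_left (hFψ n); positivity
      have h4 : ((2 : ℝ)⁻¹) ^ n * (4 : ℝ) ^ n = (2 : ℝ) ^ n := by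
        rw [← mul_pow]; norm_num
      rw [h4] at h3
      rw [h2] at h1
      linarith
    obtain ⟨n, hn⟩ := pow_unbounded_of_one_lt (ψ g) (by norm_num : (1:ℝ) < 2)
    exact absurd (hfinal n) (not_lt.mpr hn.le)
end
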